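/- arXiv:1510.02289 — 6 statements merged into one kernel-verified Lean document; each statement's English description precedes it below -/
import Mathlib

section
/- Let W = W(1,(l)) be the Witt algebra over a field of characteristic 2 with l ≥ 2. Then the derived subalgebra W' has dimension 2^l - 1, i.e., codimension 1 in W; specifically W' is spanned by a_0, ..., a_{2^l - 2} and a_{2^l-1} is not in W'. -/
private lemma cast_mod_two (F : Type*) [Field F] [CharP F 2] (n : ℕ) :
    (n : F) = ((n % 2 : ℕ) : F) := by
  conv_lhs => rw [← Nat.div_add_mod n 2]
  push_cast
  have h2 : (2 : F) = 0 := by exact_mod_cast CharP.cast_eq_zero F 2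
  rw [h2]
  ring

private lemma mul_sub_one_div {s b : ℕ} (hs : 0 < s) (hb : 0 < b) :
    (s * b - 1) / b = s - 1 := by
  obtain ⟨s', rfl⟩ : ∃ s', s = s' + 1 := ⟨s - 1, by omega⟩
  have e : (s' + 1) * b = b * s' + b := by ring
  have key : (b - 1 + b * s') / b = s' := by
    simp [Nat.add_mul_div_left _ _ hb, Nat.div_eq_of_lt (show b - 1 < b by omega)]
  have e2 : (s' + 1) * b - 1 = b - 1 + b * s' := by
    rw [e]; generalize b * s' = c; omega
  rw [e2, key]; omega

private lemma choose_mod_two_one {a n k : ℕ} (hn : n < 2 ^ a) (hk : k < 2 ^ a)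
    (h : ∀ i, k / 2 ^ i % 2 ≤ n / 2 ^ i % 2) : n.choose k % 2 = 1 := by
  have := Choose.choose_modEq_prod_range_choose_nat (p := 2) hn hk
  have hp : ∏ i ∈ Finset.range a, (n / 2 ^ i % 2).choose (k / 2 ^ i % 2) = 1 := by
    apply Finset.prod_eq_one
    intro i _
    have h1 : n / 2 ^ i % 2 < 2 := Nat.mod_lt _ two_pos
    have h2 : k / 2 ^ i % 2 < 2 := Nat.mod_lt _ two_pos
    have h3 := h i
    have e1 : n / 2 ^ i % 2 = 0 ∨ n / 2 ^ i % 2 = 1 := by omega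
    have e2 : k / 2 ^ i % 2 = 0 ∨ k / 2 ^ i % 2 = 1 := by omega
    rcases e1 with e1 | e1 <;> rcases e2 with e2 | e2 <;> rw [e1, e2] <;> first | rfl | omega
  rw [Nat.ModEq, hp] at this
  simpa using this

private lemma choose_mod_two_zero {a n k i₀ : ℕ} (hn : n < 2 ^ a) (hk : k < 2 ^ a)
    (h0 : n / 2 ^ i₀ % 2 = 0) (h1 : k / 2 ^ i₀ % 2 = 1) : n.choose k % 2 = 0 := by
  have hi₀ : i₀ < a := by
    by_contra hc
    have : 2 ^ a ≤ 2 ^ i₀ := Nat.pow_le_pow_right two_pos (by omega)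
    have : k / 2 ^ i₀ = 0 := Nat.div_eq_of_lt (by omega)
    omega
  have := Choose.choose_modEq_prod_range_choose_nat (p := 2) hn hk
  have hp : ∏ i ∈ Finset.range a, (n / 2 ^ i % 2).choose (k / 2 ^ i % 2) = 0 := by
    apply Finset.prod_eq_zero (Finset.mem_range.mpr hi₀)
    rw [h0, h1]
    rfl
  rw [Nat.ModEq, hp] at this
  simpa using this

/-- All binomial coefficients `C(2^l - 1, i)` are odd. -/
private lemma choose_two_pow_sub_one_odd {l i : ℕ} (hi : i ≤ 2 ^ l - 1) :
    (2 ^ l - 1).choose i % 2 = 1 := by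
  have hpos : 0 < 2 ^ l := Nat.pow_pos two_pos
  apply choose_mod_two_one (a := l) (by omega) (by omega)
  intro t
  by_cases ht : t < l
  · have h1 : i / 2 ^ t % 2 < 2 := Nat.mod_lt _ two_pos
    have e : (2 ^ l - 1) / 2 ^ t % 2 = 1 := by
      have hsum : 2 ^ (l - t) * 2 ^ t = 2 ^ l := by
        rw [← pow_add]; congr 1; omega
      have hposlt : 0 < 2 ^ (l - t) := Nat.pow_pos two_pos
      have hpost : 0 < 2 ^ t := Nat.pow_pos two_pos
      have hdiv : (2 ^ l - 1) / 2 ^ t = 2 ^ (l - t) - 1 := by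
        rw [← hsum]; exact mul_sub_one_div hposlt hpost
      rw [hdiv]
      have : 2 ^ (l - t) = 2 * 2 ^ (l - t - 1) := by
        rw [← pow_succ']; congr 1; omega
      omega
    omega
  · have : 2 ^ l ≤ 2 ^ t := Nat.pow_le_pow_right two_pos (by omega)
    have : i / 2 ^ t = 0 := Nat.div_eq_of_lt (by omega)
    simp [this]

private lemma mod_pow_of_bits {k m : ℕ} (h : ∀ t < m, k / 2 ^ t % 2 = 1) :
    k % 2 ^ m = 2 ^ m - 1 := by
  induction m with
  | zero => simp [Nat.mod_one]
  | succ m ih =>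
    have h1 := ih (fun t ht => h t (by omega))
    have h2 := h m (by omega)
    have h3 := Nat.mod_pow_succ (x := k) (b := 2) (k := m)
    rw [h2, mul_one] at h3
    have hp : 0 < 2 ^ m := Nat.pow_pos two_pos
    have h4 : 2 ^ (m + 1) = 2 * 2 ^ m := by rw [pow_succ']
    omega

/-- For every `k < 2^l - 1` there is a pair `(i,j)` with `i + j - 1 = k` whose
binomial coefficients have opposite parity. -/
private lemma exists_bracket_pair {l k : ℕ} (hl : 2 ≤ l) (hk : k < 2 ^ l - 1) :
    ∃ i j : ℕ, i ≤ 2 ^ l - 1 ∧ j ≤ 2 ^ l - 1 ∧ i + j - 1 = k ∧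
      Nat.choose k i % 2 = 1 ∧ Nat.choose k j % 2 = 0 := by
  have hpl : 0 < 2 ^ l := Nat.pow_pos two_pos
  have hkl : k < 2 ^ l := by omega
  by_cases hke : k % 2 = 0
  · -- even case: (i, j) = (k, 1)
    refine ⟨k, 1, by omega, by omega, by omega, ?_, ?_⟩
    · rw [Nat.choose_self]
    · rw [Nat.choose_one_right]; omega
  · -- odd case
    have hex : ∃ t, k / 2 ^ t % 2 = 0 := ⟨l, by rw [Nat.div_eq_of_lt hkl]⟩
    set m := Nat.find hex with hm
    have hm0 : k / 2 ^ m % 2 = 0 := Nat.find_spec hex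
    have hmin : ∀ t < m, k / 2 ^ t % 2 = 1 := by
      intro t ht
      have := Nat.find_min hex ht
      omega
    have hpm : 0 < 2 ^ m := Nat.pow_pos two_pos
    have hm1 : 1 ≤ m := by
      rcases Nat.eq_zero_or_pos m with h | h
      · exfalso; rw [h] at hm0; simp at hm0; omega
      · exact h
    have hml : m < l := by
      by_contra hc
      have hbits : ∀ t < l, k / 2 ^ t % 2 = 1 := fun t ht => hmin t (by omega)
      have := mod_pow_of_bits hbits
      rw [Nat.mod_eq_of_lt hkl] at this
      omega
    have hprefix : k % 2 ^ m = 2 ^ m - 1 := mod_pow_of_bits hmin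
    set q := k / 2 ^ m * 2 ^ m with hq
    have hdm : k / 2 ^ m * 2 ^ m + k % 2 ^ m = k := by
      rw [mul_comm]; exact Nat.div_add_mod k (2 ^ m)
    have keq : k = q + (2 ^ m - 1) := by omega
    have h2m_le : 2 ^ m ≤ 2 ^ l - 1 := by
      have h1 : 2 ^ m ≤ 2 ^ (l - 1) := Nat.pow_le_pow_right two_pos (by omega)
      have h2 : 2 ^ l = 2 * 2 ^ (l - 1) := by
        rw [← pow_succ']; congr 1; omega
      have h3 : 0 < 2 ^ (l - 1) := Nat.pow_pos two_pos
      omega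
    refine ⟨q, 2 ^ m, by omega, h2m_le, by omega, ?_, ?_⟩
    · -- C(k, q) odd
      apply choose_mod_two_one (a := l) hkl (by omega)
      intro t
      by_cases ht : t < m
      · have e2 : (2 : ℕ) ^ m = 2 ^ (m - t - 1) * 2 * 2 ^ t := by
          rw [mul_assoc, ← pow_succ', ← pow_add]
          congr 1
          omega
        have e3 : q = k / 2 ^ m * 2 ^ (m - t - 1) * 2 * 2 ^ t := by
          rw [hq, e2]; ring
        have e4 : q / 2 ^ t = k / 2 ^ m * 2 ^ (m - t - 1) * 2 := by
          rw [e3, Nat.mul_div_cancel _ (Nat.pow_pos two_pos)]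
        rw [e4]
        simp [Nat.mul_mod_left]
      · have e1 : (2 : ℕ) ^ t = 2 ^ m * 2 ^ (t - m) := by
          rw [← pow_add]; congr 1; omega
        have e2 : q / 2 ^ t = k / 2 ^ t := by
          rw [e1, ← Nat.div_div_eq_div_mul, ← Nat.div_div_eq_div_mul, hq,
            Nat.mul_div_cancel _ hpm]
        rw [e2]
    · -- C(k, 2^m) even
      apply choose_mod_two_zero (a := l) (i₀ := m) hkl (by omega) hm0
      rw [Nat.div_self hpm]

/-- For the Witt algebra `W = W(1,(l))` over a field of characteristic 2
with `l ≥ 2`, the derived subalgebra `W' = [W,W]` is spanned by `a₀, …, a_{2^l-2}`,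
does not contain `a_{2^l-1}`, and has dimension `2^l - 1` (codimension 1). -/
theorem witt_derived_codim_one
    (F : Type*) [Field F] [CharP F 2] (l : ℕ) (hl : 2 ≤ l)
    (L : Type*) [LieRing L] [LieAlgebra F L]
    (a : ℕ → L) (b : Module.Basis (Fin (2 ^ l)) F L)
    (hb : ∀ i : Fin (2 ^ l), b i = a i)
    (ha0 : ∀ k, 2 ^ l - 1 < k → a k = 0)
    (hbracket : ∀ i j, i ≤ 2 ^ l - 1 → j ≤ 2 ^ l - 1 →
      ⁅a i, a j⁆ =
        ((Nat.choose (i + j - 1) i : F) - (Nat.choose (i + j - 1) j : F)) • a (i + j - 1)) :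
    (LieAlgebra.derivedSeries F L 1 : Submodule F L)
        = Submodule.span F (a '' Set.Iio (2 ^ l - 1)) ∧
      a (2 ^ l - 1) ∉ LieAlgebra.derivedSeries F L 1 ∧
      Module.finrank F (LieAlgebra.derivedSeries F L 1) = 2 ^ l - 1 := by
  have hpl : 0 < 2 ^ l := Nat.pow_pos two_pos
  set S : Submodule F L := Submodule.span F (a '' Set.Iio (2 ^ l - 1)) with hS
  have hcast1 : ∀ n : ℕ, n % 2 = 1 → (n : F) = 1 := by
    intro n hn; rw [cast_mod_two F n, hn]; exact Nat.cast_one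
  have hcast0 : ∀ n : ℕ, n % 2 = 0 → (n : F) = 0 := by
    intro n hn; rw [cast_mod_two F n, hn]; exact Nat.cast_zero
  have hgen : ∀ i j : Fin (2 ^ l), ⁅b i, b j⁆ ∈ S := by
    intro i j
    have hi : (i : ℕ) ≤ 2 ^ l - 1 := by have := i.isLt; omega
    have hj : (j : ℕ) ≤ 2 ^ l - 1 := by have := j.isLt; omega
    rw [hb i, hb j, hbracket i j hi hj]
    rcases lt_trichotomy ((i : ℕ) + j - 1) (2 ^ l - 1) with hlt | heq | hgt
    · exact Submodule.smul_mem _ _ (Submodule.subset_span ⟨_, hlt, rfl⟩)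
    · rw [heq]
      have hci := choose_two_pow_sub_one_odd (l := l) (i := (i : ℕ)) hi
      have hcj := choose_two_pow_sub_one_odd (l := l) (i := (j : ℕ)) hj
      rw [hcast1 _ hci, hcast1 _ hcj]
      simp
    · rw [ha0 _ hgt]
      simp
  have hkey : ∀ x y : L, ⁅x, y⁆ ∈ S := by
    intro x y
    have hx : x ∈ Submodule.span F (Set.range ⇑b) := by
      rw [b.span_eq]; exact Submodule.mem_top
    have hy : y ∈ Submodule.span F (Set.range ⇑b) := by
      rw [b.span_eq]; exact Submodule.mem_top
    refine Submodule.span_induction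
      (p := fun x _ => ∀ y ∈ Submodule.span F (Set.range ⇑b), ⁅x, y⁆ ∈ S)
      ?_ ?_ ?_ ?_ hx y hy
    · rintro x ⟨i, rfl⟩ y hy
      refine Submodule.span_induction (p := fun y _ => ⁅b i, y⁆ ∈ S) ?_ ?_ ?_ ?_ hy
      · rintro z ⟨j, rfl⟩; exact hgen i j
      · show ⁅b i, (0 : L)⁆ ∈ S; rw [lie_zero]; exact S.zero_mem
      · intro y1 y2 _ _ h1 h2; rw [lie_add]; exact S.add_mem h1 h2
      · intro c y1 _ h1; rw [lie_smul]; exact S.smul_mem c h1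
    · intro y _; rw [zero_lie]; exact S.zero_mem
    · intro x1 x2 _ _ h1 h2 y hy; rw [add_lie]; exact S.add_mem (h1 y hy) (h2 y hy)
    · intro c x1 _ h1 y hy; rw [smul_lie]; exact S.smul_mem c (h1 y hy)
  have hDS : LieAlgebra.derivedSeries F L 1 = ⁅(⊤ : LieIdeal F L), ⊤⁆ := by
    rw [LieAlgebra.derivedSeries_def, LieAlgebra.derivedSeriesOfIdeal_succ,
      LieAlgebra.derivedSeriesOfIdeal_zero]
  have hsub : (LieAlgebra.derivedSeries F L 1 : Submodule F L) = S := by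
    apply le_antisymm
    · rw [hDS, LieIdeal.toLieSubalgebra_toSubmodule,
        LieSubmodule.lieIdeal_oper_eq_linear_span', Submodule.span_le]
      rintro m ⟨x, -, y, -, rfl⟩
      exact hkey x y
    · rw [hS, Submodule.span_le]
      rintro x ⟨k, hk, rfl⟩
      simp only [Set.mem_Iio] at hk
      obtain ⟨i, j, hi, hj, hij, hpi, hpj⟩ := exists_bracket_pair hl hk
      have hbr := hbracket i j hi hj
      rw [hij, hcast1 _ hpi, hcast0 _ hpj, sub_zero, one_smul] at hbr
      have hmem2 : a k ∈ LieAlgebra.derivedSeries F L 1 := by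
        rw [hDS, ← hbr]
        exact LieSubmodule.lie_mem_lie (LieSubmodule.mem_top _) (LieSubmodule.mem_top _)
      exact hmem2
  have hnotmem : a (2 ^ l - 1) ∉ S := by
    have himg : a '' Set.Iio (2 ^ l - 1) = ⇑b '' {i : Fin (2 ^ l) | (i : ℕ) < 2 ^ l - 1} := by
      ext x
      constructor
      · rintro ⟨k, hk, rfl⟩
        simp only [Set.mem_Iio] at hk
        exact ⟨⟨k, by omega⟩, hk, by rw [hb]⟩
      · rintro ⟨i, hi, rfl⟩
        exact ⟨i, hi, (hb i).symm⟩
    rw [hS, himg]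
    have hab : a (2 ^ l - 1) = b ⟨2 ^ l - 1, by omega⟩ := by rw [hb]
    rw [hab]
    intro hmem
    rw [b.self_mem_span_image] at hmem
    simp only [Set.mem_setOf_eq] at hmem
    omega
  have hrank : Module.finrank F S = 2 ^ l - 1 := by
    have hle : 2 ^ l - 1 ≤ 2 ^ l := by omega
    set v : Fin (2 ^ l - 1) → L := ⇑b ∘ Fin.castLE hle with hv
    have hli : LinearIndependent F v := b.linearIndependent.comp _ (Fin.castLE_injective hle)
    have hrange : Set.range v = a '' Set.Iio (2 ^ l - 1) := by
      ext x
      constructor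
      · rintro ⟨i, rfl⟩
        exact ⟨i, i.isLt, by rw [hv, Function.comp_apply, hb]; rfl⟩
      · rintro ⟨k, hk, rfl⟩
        simp only [Set.mem_Iio] at hk
        exact ⟨⟨k, hk⟩, by rw [hv, Function.comp_apply, hb]; rfl⟩
    rw [hS, ← hrange, finrank_span_eq_card hli, Fintype.card_fin]
  refine ⟨hsub, ?_, ?_⟩
  · intro hmem
    have h1 : a (2 ^ l - 1) ∈ (LieAlgebra.derivedSeries F L 1 : Submodule F L) :=
      (LieSubmodule.mem_toSubmodule _).mpr hmem
    rw [hsub] at h1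
    exact hnotmem h1
  · have he : Module.finrank F (LieAlgebra.derivedSeries F L 1) =
        Module.finrank F ((LieAlgebra.derivedSeries F L 1 : Submodule F L)) := rfl
    rw [he, hsub]
    exact hrank
end

section
/- In the Witt algebra derived subalgebra W' = W(1,(l))' over a field of characteristic 2 with l ≥ 2: if x = Σ_{i=0}^{2^l-1} λ_i a_i is a nonzero element and k is maximal with λ_k ≠ 0, then (ad a_0)^k(x) = λ_k a_0. Consequently every nonzero ideal of W' contains a_0. -/
/-- In `W' = W(1,(l))'` over a field of characteristic 2 (`l ≥ 2`):
if `x = Σ_{i=0}^{2^l-1} λᵢ aᵢ` is nonzero and `k` is maximal with `λ_k ≠ 0`, then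
`(ad a₀)^k (x) = λ_k a₀`; consequently every nonzero ideal of `W'` contains `a₀`. -/
theorem witt_derived_ideal_contains_a0
    (F : Type*) [Field F] [CharP F 2] (l : ℕ) (hl : 2 ≤ l)
    (L : Type*) [LieRing L] [LieAlgebra F L]
    (a : ℕ → L) (b : Module.Basis (Fin (2 ^ l)) F L)
    (hb : ∀ i : Fin (2 ^ l), b i = a i)
    (ha0 : ∀ k, 2 ^ l - 1 < k → a k = 0)
    (hbracket : ∀ i j, i ≤ 2 ^ l - 1 → j ≤ 2 ^ l - 1 →
      ⁅a i, a j⁆ =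
        ((Nat.choose (i + j - 1) i : F) - (Nat.choose (i + j - 1) j : F)) • a (i + j - 1)) :
    (∀ (lam : ℕ → F) (x : L) (k : ℕ),
        x = ∑ i ∈ Finset.range (2 ^ l), lam i • a i → x ≠ 0 →
        k ≤ 2 ^ l - 1 → lam k ≠ 0 → (∀ i, k < i → i ≤ 2 ^ l - 1 → lam i = 0) →
        ((LieAlgebra.ad F L (a 0)) ^ k) x = lam k • a 0) ∧
      (∀ I : LieIdeal F (LieAlgebra.derivedSeries F L 1), I ≠ ⊥ →
        ∃ h : a 0 ∈ LieAlgebra.derivedSeries F L 1,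
          (⟨a 0, h⟩ : LieAlgebra.derivedSeries F L 1) ∈ I) := by
  classical
  have hNpos : 0 < 2 ^ l := Nat.pow_pos (by norm_num)
  have h4 : 4 ≤ 2 ^ l := by
    calc 4 = 2 ^ 2 := by norm_num
    _ ≤ 2 ^ l := Nat.pow_le_pow_right (by norm_num) hl
  -- single step of ad
  have hstep : ∀ i, 1 ≤ i → i ≤ 2 ^ l - 1 → ⁅a 0, a i⁆ = a (i - 1) := by
    intro i h1 h2
    rw [hbracket 0 i (by omega) h2]
    have h0i : 0 + i - 1 = i - 1 := by omega
    rw [h0i, Nat.choose_zero_right, Nat.choose_eq_zero_of_lt (by omega : i - 1 < i)]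
    simp
  have hzero : ⁅a 0, a 0⁆ = 0 := by
    rw [hbracket 0 0 (by omega) (by omega)]
    simp
  -- iterated ad on basis vectors
  have hiter : ∀ k i, i ≤ 2 ^ l - 1 →
      ((LieAlgebra.ad F L (a 0)) ^ k) (a i) = if k ≤ i then a (i - k) else 0 := by
    intro k
    induction k with
    | zero => intro i _; simp
    | succ k ih =>
      intro i hi
      rw [pow_succ, Module.End.mul_apply]
      rcases Nat.eq_zero_or_pos i with h0 | h1
      · subst h0
        rw [LieAlgebra.ad_apply, hzero, map_zero]
        rw [if_neg (by omega)]
      · rw [LieAlgebra.ad_apply, hstep i h1 hi, ih (i - 1) (by omega)]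
        by_cases hk : k + 1 ≤ i
        · rw [if_pos (by omega), if_pos hk]
          congr 1
          omega
        · rw [if_neg (by omega), if_neg hk]
  have part1 : ∀ (lam : ℕ → F) (x : L) (k : ℕ),
      x = ∑ i ∈ Finset.range (2 ^ l), lam i • a i → x ≠ 0 →
      k ≤ 2 ^ l - 1 → lam k ≠ 0 → (∀ i, k < i → i ≤ 2 ^ l - 1 → lam i = 0) →
      ((LieAlgebra.ad F L (a 0)) ^ k) x = lam k • a 0 := by
    intro lam x k hx _ hk hlamk hmax
    subst hx
    rw [map_sum]
    rw [Finset.sum_eq_single k]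
    · rw [map_smul, hiter k k hk, if_pos le_rfl, Nat.sub_self]
    · intro i hi hik
      rw [map_smul]
      rcases lt_or_gt_of_ne hik with hlt | hgt
      · rw [hiter k i (by have := Finset.mem_range.mp hi; omega), if_neg (by omega),
          smul_zero]
      · rw [hmax i hgt (by have := Finset.mem_range.mp hi; omega), zero_smul]
    · intro hk'
      exact absurd (Finset.mem_range.mpr (by omega)) hk'
  refine ⟨part1, ?_⟩
  -- a 0 belongs to the derived subalgebra
  have ha1 : ⁅a 0, a 1⁆ = a 0 := by
    rw [hbracket 0 1 (by omega) (by omega)]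
    norm_num
  have ha0W : a 0 ∈ LieAlgebra.derivedSeries F L 1 := by
    rw [LieAlgebra.derivedSeries_def, LieAlgebra.derivedSeriesOfIdeal_succ,
      LieAlgebra.derivedSeriesOfIdeal_zero, ← ha1]
    exact LieSubmodule.lie_mem_lie (LieSubmodule.mem_top _) (LieSubmodule.mem_top _)
  set W := LieAlgebra.derivedSeries F L 1 with hW
  intro I hI
  refine ⟨ha0W, ?_⟩
  -- pick a nonzero element of I
  have : ∃ y : W, y ∈ I ∧ y ≠ 0 := by
    by_contra h
    push_neg at h
    exact hI (LieSubmodule.eq_bot_iff I |>.mpr fun m hm => by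
      by_contra hm0; exact hm0 (h m hm))
  obtain ⟨y, hyI, hy0⟩ := this
  have hyl0 : (y : L) ≠ 0 := fun h => hy0 (Subtype.ext h)
  set lam : ℕ → F := fun i => if h : i < 2 ^ l then b.repr (y : L) ⟨i, h⟩ else 0 with hlam
  have hrep : (y : L) = ∑ i ∈ Finset.range (2 ^ l), lam i • a i := by
    conv_lhs => rw [← b.sum_repr (y : L)]
    rw [← Fin.sum_univ_eq_sum_range (fun i => lam i • a i) (2 ^ l)]
    refine Finset.sum_congr rfl fun i _ => ?_
    rw [hb i, hlam]
    simp [Fin.eta]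
  -- the set of indices with nonzero coefficient
  set S : Finset ℕ := (Finset.range (2 ^ l)).filter (fun i => lam i ≠ 0) with hS
  have hSne : S.Nonempty := by
    by_contra h
    rw [Finset.not_nonempty_iff_eq_empty] at h
    apply hyl0
    rw [hrep]
    refine Finset.sum_eq_zero fun i hi => ?_
    have : lam i = 0 := by
      by_contra hne
      have : i ∈ S := Finset.mem_filter.mpr ⟨hi, hne⟩
      simp [h] at this
    rw [this, zero_smul]
  set k := S.max' hSne with hk
  have hkS : k ∈ S := S.max'_mem hSne
  have hkrange : k < 2 ^ l := Finset.mem_range.mp (Finset.mem_filter.mp hkS).1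
  have hlamk : lam k ≠ 0 := (Finset.mem_filter.mp hkS).2
  have hmax : ∀ i, k < i → i ≤ 2 ^ l - 1 → lam i = 0 := by
    intro i hki hile
    by_contra hne
    have hiS : i ∈ S := Finset.mem_filter.mpr ⟨Finset.mem_range.mpr (by omega), hne⟩
    exact absurd (S.le_max' i hiS) (by omega)
  have hmain : ((LieAlgebra.ad F L (a 0)) ^ k) (y : L) = lam k • a 0 :=
    part1 lam (y : L) k hrep hyl0 (by omega) hlamk hmax
  set a0' : W := ⟨a 0, ha0W⟩ with ha0'
  -- iterates stay in I and coerce correctly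
  have key : ∀ n, ((LieAlgebra.ad F W a0') ^ n) y ∈ I ∧
      ((((LieAlgebra.ad F W a0') ^ n) y : W) : L) = ((LieAlgebra.ad F L (a 0)) ^ n) (y : L) := by
    intro n
    induction n with
    | zero => exact ⟨hyI, rfl⟩
    | succ n ih =>
      rw [pow_succ', Module.End.mul_apply, pow_succ', Module.End.mul_apply]
      constructor
      · exact I.lie_mem ih.1
      · rw [LieAlgebra.ad_apply, LieAlgebra.ad_apply, ← ih.2]
        exact LieSubalgebra.coe_bracket (W : LieSubalgebra F L) a0' _
  have hzI : ((LieAlgebra.ad F W a0') ^ k) y ∈ I := (key k).1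
  have hzcoe : ((((LieAlgebra.ad F W a0') ^ k) y : W) : L) = lam k • a 0 := by
    rw [(key k).2, hmain]
  have hz : ((LieAlgebra.ad F W a0') ^ k) y = lam k • a0' := by
    apply Subtype.ext
    rw [hzcoe]
    rfl
  have : (lam k)⁻¹ • (((LieAlgebra.ad F W a0') ^ k) y) ∈ I := I.smul_mem _ hzI
  rw [hz, smul_smul, inv_mul_cancel₀ hlamk, one_smul] at this
  exact this
end

section
/- In the special algebra S = S(2,(m_1,m_2)) over a field of characteristic 2, the brackets [z_{ij}, z_{kl}] = γ_{ijkl} z_{i+k, j+l} hold, where γ_{ijkl} = C(i+k+1, i+1)(C(j+l, j) + C(j+l, j-1)) - C(i+k+1, i)(C(j+l, j+1) + C(j+l, j)) evaluated mod 2. -/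
/- Concrete model of the Witt algebra `W(2,m)` in characteristic 2: elements are
pairs `(f₁, f₂)` representing `f₁D₁ + f₂D₂`, with the Witt bracket
`[fDᵢ, gDⱼ] = fDᵢ(g)Dⱼ - gDⱼ(f)Dᵢ`. -/

/-- divided power multiplication on `A(2)` -/
def dpMul {F : Type*} [Field F] (f g : ℕ × ℕ → F) : ℕ × ℕ → F := fun k =>
  ∑ i1 ∈ Finset.range (k.1 + 1), ∑ i2 ∈ Finset.range (k.2 + 1),
    (Nat.choose k.1 i1 : F) * (Nat.choose k.2 i2 : F) * f (i1, i2) * g (k.1 - i1, k.2 - i2)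

/-- partial derivation `D₁` -/
def dpD1 {F : Type*} [Field F] (f : ℕ × ℕ → F) : ℕ × ℕ → F := fun p => f (p.1 + 1, p.2)

/-- partial derivation `D₂` -/
def dpD2 {F : Type*} [Field F] (f : ℕ × ℕ → F) : ℕ × ℕ → F := fun p => f (p.1, p.2 + 1)

/-- the Witt bracket on `W(2,m) = {f₁D₁ + f₂D₂}` -/
def wittBr {F : Type*} [Field F] (f g : (ℕ × ℕ → F) × (ℕ × ℕ → F)) :
    (ℕ × ℕ → F) × (ℕ × ℕ → F) :=
  (dpMul f.1 (dpD1 g.1) + dpMul f.2 (dpD2 g.1) - dpMul g.1 (dpD1 f.1) - dpMul g.2 (dpD2 f.1),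
   dpMul f.1 (dpD1 g.2) + dpMul f.2 (dpD2 g.2) - dpMul g.1 (dpD1 f.2) - dpMul g.2 (dpD2 f.2))

/-- `z_{ij} = X^{(i+1,j)}D₁ - X^{(i,j+1)}D₂` -/
def sZ {F : Type*} [Field F] (i j : ℕ) : (ℕ × ℕ → F) × (ℕ × ℕ → F) :=
  (Pi.single (i + 1, j) 1, -Pi.single (i, j + 1) 1)

/-- `z_{ij}` extended by zero outside the index range of `S(2,(m₁,m₂))` -/
def sZext {F : Type*} [Field F] (m1 m2 i j : ℕ) : (ℕ × ℕ → F) × (ℕ × ℕ → F) :=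
  if i ≤ 2 ^ m1 - 2 ∧ j ≤ 2 ^ m2 - 2 then sZ i j else 0

/-- `γ_{ijkl} = C(i+k+1,i+1)(C(j+l,j) + C(j+l,j-1)) - C(i+k+1,i)(C(j+l,j+1) + C(j+l,j))`,
with the convention `C(n,-1) = 0`. -/
def sGamma {F : Type*} [Field F] (i j k l : ℕ) : F :=
  (Nat.choose (i + k + 1) (i + 1) : F) *
      ((Nat.choose (j + l) j : F) +
        (if j = 0 then 0 else (Nat.choose (j + l) (j - 1) : F))) -
    (Nat.choose (i + k + 1) i : F) *
      ((Nat.choose (j + l) (j + 1) : F) + (Nat.choose (j + l) j : F))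

/-! auxiliary lemmas -/

lemma dpMul_single {F : Type*} [Field F] (a1 a2 b1 b2 : ℕ) (c d : F) :
    dpMul (Pi.single (a1, a2) c) (Pi.single (b1, b2) d) =
      Pi.single (a1 + b1, a2 + b2)
        (((a1 + b1).choose a1 : F) * ((a2 + b2).choose a2 : F) * c * d) := by
  funext p
  obtain ⟨p1, p2⟩ := p
  set W : F := if p1 - a1 = b1 ∧ p2 - a2 = b2 then
      (p1.choose a1 : F) * (p2.choose a2 : F) * c * d else 0 with hW
  have step : ∀ i1 ∈ Finset.range (p1 + 1), ∀ i2 ∈ Finset.range (p2 + 1),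
      (p1.choose i1 : F) * (p2.choose i2 : F) * (Pi.single (a1, a2) c : ℕ × ℕ → F) (i1, i2) *
        (Pi.single (b1, b2) d : ℕ × ℕ → F) (p1 - i1, p2 - i2) =
      if i1 = a1 then (if i2 = a2 then W else 0) else 0 := by
    intro i1 _ i2 _
    simp only [hW, Pi.single_apply, Prod.mk.injEq]
    split_ifs <;> simp_all
  have inner : ∀ i1 ∈ Finset.range (p1 + 1),
      (∑ i2 ∈ Finset.range (p2 + 1), if i1 = a1 then (if i2 = a2 then W else 0) else 0) =
      if i1 = a1 then (if a2 < p2 + 1 then W else 0) else 0 := by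
    intro i1 _
    by_cases h : i1 = a1
    · simp [h, Finset.sum_ite_eq', Finset.mem_range]
    · simp [h]
  simp only [dpMul]
  rw [Finset.sum_congr rfl fun i1 h1 => Finset.sum_congr rfl fun i2 h2 => step i1 h1 i2 h2,
    Finset.sum_congr rfl inner, Finset.sum_ite_eq']
  simp only [hW, Finset.mem_range, Pi.single_apply, Prod.mk.injEq]
  by_cases hp : p1 = a1 + b1 ∧ p2 = a2 + b2
  · obtain ⟨rfl, rfl⟩ := hp
    simp [Nat.add_sub_cancel_left, Nat.lt_succ_iff]
  · split_ifs <;> first | rfl | (exfalso; omega)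

lemma dpMul_zero {F : Type*} [Field F] (f : ℕ × ℕ → F) : dpMul f 0 = 0 := by
  funext p; simp [dpMul]

lemma dpD1_single {F : Type*} [Field F] (b1 b2 : ℕ) (d : F) :
    dpD1 (Pi.single (b1 + 1, b2) d) = Pi.single (b1, b2) d := by
  funext p
  obtain ⟨p1, p2⟩ := p
  simp only [dpD1, Pi.single_apply, Prod.mk.injEq]
  congr 1
  simp [eq_iff_iff]

lemma dpD1_single_zero {F : Type*} [Field F] (b2 : ℕ) (d : F) :
    dpD1 (Pi.single (0, b2) d) = 0 := by
  funext p
  obtain ⟨p1, p2⟩ := p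
  simp [dpD1, Pi.single_apply, Prod.mk.injEq]

lemma dpD2_single {F : Type*} [Field F] (b1 b2 : ℕ) (d : F) :
    dpD2 (Pi.single (b1, b2 + 1) d) = Pi.single (b1, b2) d := by
  funext p
  obtain ⟨p1, p2⟩ := p
  simp only [dpD2, Pi.single_apply, Prod.mk.injEq]
  congr 1
  simp [eq_iff_iff]

lemma dpD2_single_zero {F : Type*} [Field F] (b1 : ℕ) (d : F) :
    dpD2 (Pi.single (b1, 0) d) = 0 := by
  funext p
  obtain ⟨p1, p2⟩ := p
  simp [dpD2, Pi.single_apply, Prod.mk.injEq]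

lemma sZ_def' {F : Type*} [Field F] (i j : ℕ) :
    sZ (F := F) i j = (Pi.single (i + 1, j) 1, Pi.single (i, j + 1) (-1)) := by
  rw [sZ, ← Pi.single_neg]

lemma single_combine {F : Type*} [Field F] {x1 x2 x3 x4 x : ℕ × ℕ} {c1 c2 c3 c4 C : F}
    (h1 : x1 = x) (h2 : x2 = x) (h3 : x3 = x) (h4 : x4 = x)
    (h : c1 + c2 - c3 - c4 = C) :
    (Pi.single x1 c1 + Pi.single x2 c2 - Pi.single x3 c3 - Pi.single x4 c4 : ℕ × ℕ → F) =
      Pi.single x C := by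
  subst h1 h2 h3 h4
  rw [← Pi.single_add, ← Pi.single_sub, ← Pi.single_sub, h]

lemma zero_as_single {F : Type*} [Field F] (x : ℕ × ℕ) :
    (0 : ℕ × ℕ → F) = Pi.single x 0 := (Pi.single_zero x).symm

lemma smul_single {F : Type*} [Field F] (x : ℕ × ℕ) (c d : F) :
    c • (Pi.single x d : ℕ × ℕ → F) = Pi.single x (c * d) := by
  funext p
  simp [Pi.single_apply, mul_ite]

lemma choose_symm_add (a b : ℕ) : (a + b).choose a = (a + b).choose b := by
  have := Nat.choose_symm (n := a + b) (k := a) (Nat.le_add_right a b)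
  simpa [Nat.add_sub_cancel_left] using this.symm

lemma pascalF {F : Type*} [Field F] (n k : ℕ) :
    (((n + 1).choose (k + 1) : ℕ) : F) = ((n.choose k : ℕ) : F) + ((n.choose (k + 1) : ℕ) : F) := by
  rw [Nat.choose_succ_succ]
  push_cast
  ring

/-- safe renaming of a cast binomial coefficient -/
lemma chcast {F : Type*} [Field F] {n k n' k' : ℕ} (hn : n = n') (hk : k = k') :
    ((n.choose k : ℕ) : F) = ((n'.choose k' : ℕ) : F) := by subst hn hk; rfl

/-- evaluation of a cast binomial coefficient -/
lemma chval {F : Type*} [Field F] (n k v : ℕ) (h : n.choose k = v) :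
    ((n.choose k : ℕ) : F) = (v : F) := by rw [h]

/-- symmetry of a cast binomial coefficient -/
lemma chsymm {F : Type*} [Field F] {n k k' : ℕ} (h : k + k' = n) :
    ((n.choose k : ℕ) : F) = ((n.choose k' : ℕ) : F) := by
  subst h
  rw [choose_symm_add]

/-- Pascal's rule for a cast binomial coefficient -/
lemma chpascal {F : Type*} [Field F] {n k : ℕ} (n' k' : ℕ) (hn : n = n' + 1) (hk : k = k' + 1) :
    ((n.choose k : ℕ) : F) = ((n'.choose k' : ℕ) : F) + ((n'.choose (k' + 1) : ℕ) : F) := by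
  subst hn hk
  exact pascalF n' k'

/-- Pascal's rule producing the `if`-guarded term of `sGamma` -/
lemma chpascal_ite0 {F : Type*} [Field F] (j l : ℕ) :
    (((j + l + 1).choose j : ℕ) : F) =
      (((j + l).choose j : ℕ) : F) +
        (if j = 0 then (0 : F) else (((j + l).choose (j - 1) : ℕ) : F)) := by
  obtain _ | j := j
  · simp
  · rw [if_neg (by omega)]
    rw [chcast (F := F) (show j+1+l+1 = (j+1+l)+1 by omega) (rfl : j+1 = j+1), pascalF (j + 1 + l) j]
    rw [chcast (F := F) (rfl : j + 1 + l = j + 1 + l) (show j + 1 - 1 = j by omega)]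
    ring

lemma chpascal_ite {F : Type*} [Field F] (j l : ℕ) {n k : ℕ} (hn : n = j + l + 1) (hk : k = j) :
    ((n.choose k : ℕ) : F) =
      (((j + l).choose j : ℕ) : F) +
        (if j = 0 then (0 : F) else (((j + l).choose (j - 1) : ℕ) : F)) := by
  rw [hn, hk]
  exact chpascal_ite0 j l

lemma comp1 {F : Type*} [Field F] [CharP F 2] (i j k l : ℕ) :
    (wittBr (sZ (F := F) i j) (sZ k l)).1 =
      Pi.single (i + k + 1, j + l) (sGamma (F := F) i j k l) := by
  have pe : ∀ a b c d : ℕ, a = c → b = d → ((a,b) : ℕ × ℕ) = (c,d) := by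
    intro a b c d h1 h2; rw [h1, h2]
  obtain _ | j := j <;> obtain _ | l := l
  · -- j = 0, l = 0
    simp only [wittBr, sZ_def', dpD1_single, dpD2_single_zero, dpMul_zero, dpMul_single]
    rw [zero_as_single (F := F) ((i+k+1, 0+0) : ℕ × ℕ)]
    refine single_combine (pe _ _ _ _ (by omega) (by omega)) rfl
      (pe _ _ _ _ (by omega) (by omega)) rfl ?_
    simp only [sGamma, reduceIte]
    rw [chcast (F := F) (show i+1+k = i+k+1 by omega) (rfl : i+1 = i+1),
      chcast (F := F) (show k+1+i = i+k+1 by omega) (rfl : k+1 = k+1),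
      chsymm (F := F) (show k+1+i = i+k+1 by omega),
      chval (F := F) (0+0) (0+1) 0 (by simp)]
    push_cast
    ring
  · -- j = 0, l = l+1
    simp only [wittBr, sZ_def', dpD1_single, dpD2_single, dpD2_single_zero, dpMul_zero,
      dpMul_single]
    rw [zero_as_single (F := F) ((i+k+1, 0+(l+1)) : ℕ × ℕ)]
    refine single_combine (pe _ _ _ _ (by omega) (by omega)) (pe _ _ _ _ (by omega) (by omega))
      (pe _ _ _ _ (by omega) (by omega)) rfl ?_
    simp only [sGamma, reduceIte]
    rw [chcast (F := F) (show i+1+k = i+k+1 by omega) (rfl : i+1 = i+1),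
      chcast (F := F) (show i+(k+1) = i+k+1 by omega) (rfl : i = i),
      chcast (F := F) (show k+1+i = i+k+1 by omega) (rfl : k+1 = k+1),
      chsymm (F := F) (show k+1+i = i+k+1 by omega),
      chcast (F := F) (show (0:ℕ)+1+l = 0+(l+1) by omega) (rfl : (0:ℕ)+1 = 0+1),
      chcast (F := F) (show l+1+0 = 0+(l+1) by omega) (rfl : l+1 = l+1),
      chsymm (F := F) (show (l+1)+0 = 0+(l+1) by omega)]
    push_cast
    ring
  · -- j = j+1, l = 0
    simp only [wittBr, sZ_def', dpD1_single, dpD2_single, dpD2_single_zero, dpMul_zero,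
      dpMul_single]
    rw [zero_as_single (F := F) ((i+k+1, j+1+0) : ℕ × ℕ)]
    refine single_combine (pe _ _ _ _ (by omega) (by omega)) rfl
      (pe _ _ _ _ (by omega) (by omega)) (pe _ _ _ _ (by omega) (by omega)) ?_
    simp only [sGamma]
    rw [if_neg (by omega : ¬(j+1 = 0))]
    rw [chcast (F := F) (show i+1+k = i+k+1 by omega) (rfl : i+1 = i+1),
      chcast (F := F) (show k+1+i = i+k+1 by omega) (rfl : k+1 = k+1),
      chsymm (F := F) (show k+1+i = i+k+1 by omega),
      chcast (F := F) (show k+(i+1) = i+k+1 by omega) (rfl : k = k),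
      chsymm (F := F) (show k+(i+1) = i+k+1 by omega),
      chcast (F := F) (show (0:ℕ)+(j+1) = j+1+0 by omega) (rfl : (0:ℕ) = 0),
      chsymm (F := F) (show (0:ℕ)+(j+1) = j+1+0 by omega),
      chcast (F := F) (show (0:ℕ)+1+j = j+1+0 by omega) (rfl : (0:ℕ)+1 = 0+1),
      chsymm (F := F) (show (0+1)+j = j+1+0 by omega),
      chcast (F := F) (rfl : j+1+0 = j+1+0) (show j+1-1 = j by omega),
      chval (F := F) (j+1+0) (j+1+1) 0 (Nat.choose_eq_zero_of_lt (by omega))]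
    push_cast
    ring
  · -- j = j+1, l = l+1
    simp only [wittBr, sZ_def', dpD1_single, dpD2_single, dpMul_single]
    refine single_combine (pe _ _ _ _ (by omega) (by omega)) (pe _ _ _ _ (by omega) (by omega))
      (pe _ _ _ _ (by omega) (by omega)) (pe _ _ _ _ (by omega) (by omega)) ?_
    simp only [sGamma]
    rw [if_neg (by omega : ¬(j+1 = 0))]
    rw [chcast (F := F) (show i+1+k = i+k+1 by omega) (rfl : i+1 = i+1),
      chcast (F := F) (show i+(k+1) = i+k+1 by omega) (rfl : i = i),
      chcast (F := F) (show k+1+i = i+k+1 by omega) (rfl : k+1 = k+1),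
      chsymm (F := F) (show k+1+i = i+k+1 by omega),
      chcast (F := F) (show k+(i+1) = i+k+1 by omega) (rfl : k = k),
      chsymm (F := F) (show k+(i+1) = i+k+1 by omega),
      chcast (F := F) (show j+1+1+l = j+1+(l+1) by omega) (rfl : j+1+1 = j+1+1),
      chcast (F := F) (show l+1+(j+1) = j+1+(l+1) by omega) (rfl : l+1 = l+1),
      chsymm (F := F) (show (l+1)+(j+1) = j+1+(l+1) by omega),
      chcast (F := F) (show l+1+1+j = j+1+(l+1) by omega) (rfl : l+1+1 = l+1+1),
      chsymm (F := F) (show (l+1+1)+j = j+1+(l+1) by omega),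
      chcast (F := F) (rfl : j+1+(l+1) = j+1+(l+1)) (show j+1-1 = j by omega)]
    push_cast
    ring

lemma comp2 {F : Type*} [Field F] [CharP F 2] (i j k l : ℕ) :
    (wittBr (sZ (F := F) i j) (sZ k l)).2 =
      Pi.single (i + k, j + l + 1) (sGamma (F := F) i j k l) := by
  have pe : ∀ a b c d : ℕ, a = c → b = d → ((a,b) : ℕ × ℕ) = (c,d) := by
    intro a b c d h1 h2; rw [h1, h2]
  obtain _ | i := i <;> obtain _ | k := k
  · -- i = 0, k = 0
    simp only [wittBr, sZ_def', dpD1_single, dpD2_single, dpD1_single_zero, dpMul_zero,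
      dpMul_single]
    rw [zero_as_single (F := F) ((0+0, j+l+1) : ℕ × ℕ)]
    refine single_combine rfl (pe _ _ _ _ (by omega) (by omega)) rfl
      (pe _ _ _ _ (by omega) (by omega)) ?_
    simp only [sGamma]
    rw [chpascal (F := F) (j+l) j (show j+1+l = (j+l)+1 by omega) rfl,
      chsymm (F := F) (rfl : (l+1)+j = l+1+j),
      chpascal_ite (F := F) j l (show l+1+j = j+l+1 by omega) rfl,
      chval (F := F) (0+0+1) (0+1) 1 (by simp),
      chval (F := F) (0+0+1) 0 1 (Nat.choose_zero_right _),
      chval (F := F) (0+0) 0 1 (Nat.choose_zero_right _)]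
    simp only [CharTwo.sub_eq_add, CharTwo.neg_eq]
    push_cast
    ring
  · -- i = 0, k = k+1
    simp only [wittBr, sZ_def', dpD1_single, dpD2_single, dpD1_single_zero, dpMul_zero,
      dpMul_single]
    rw [zero_as_single (F := F) ((0+(k+1), j+l+1) : ℕ × ℕ)]
    refine single_combine (pe _ _ _ _ (by omega) (by omega)) (pe _ _ _ _ (by omega) (by omega))
      rfl (pe _ _ _ _ (by omega) (by omega)) ?_
    simp only [sGamma]
    rw [chcast (F := F) (show (0:ℕ)+1+k = k+1 by omega) (rfl : (0:ℕ)+1 = 0+1),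
      chpascal_ite (F := F) j l (show j+(l+1) = j+l+1 by omega) rfl,
      chval (F := F) (0+(k+1)) 0 1 (Nat.choose_zero_right _),
      chpascal (F := F) (j+l) j (show j+1+l = (j+l)+1 by omega) rfl,
      chval (F := F) (k+1+0) (k+1) 1 (by simp),
      chsymm (F := F) (rfl : (l+1)+j = l+1+j),
      chpascal_ite (F := F) j l (show l+1+j = j+l+1 by omega) rfl,
      chpascal (F := F) (k+1) 0 (show (0:ℕ)+(k+1)+1 = (k+1)+1 by omega) (rfl : (0:ℕ)+1 = 0+1),
      chval (F := F) (k+1) 0 1 (Nat.choose_zero_right _),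
      chval (F := F) (0+(k+1)+1) 0 1 (Nat.choose_zero_right _)]
    simp only [CharTwo.sub_eq_add, CharTwo.neg_eq]
    push_cast
    ring
  · -- i = i+1, k = 0
    simp only [wittBr, sZ_def', dpD1_single, dpD2_single, dpD1_single_zero, dpMul_zero,
      dpMul_single]
    rw [zero_as_single (F := F) ((i+1+0, j+l+1) : ℕ × ℕ)]
    refine single_combine rfl (pe _ _ _ _ (by omega) (by omega))
      (pe _ _ _ _ (by omega) (by omega)) (pe _ _ _ _ (by omega) (by omega)) ?_
    simp only [sGamma]
    rw [chval (F := F) (i+1+0) (i+1) 1 (by simp),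
      chpascal (F := F) (j+l) j (show j+1+l = (j+l)+1 by omega) rfl,
      chcast (F := F) (show (0:ℕ)+1+i = i+1 by omega) (rfl : (0:ℕ)+1 = 0+1),
      chsymm (F := F) (show (0+1)+i = i+1 by omega),
      chsymm (F := F) (rfl : l+(j+1) = l+(j+1)),
      chpascal (F := F) (j+l) j (show l+(j+1) = (j+l)+1 by omega) rfl,
      chval (F := F) (0+(i+1)) 0 1 (Nat.choose_zero_right _),
      chsymm (F := F) (rfl : (l+1)+j = l+1+j),
      chpascal_ite (F := F) j l (show l+1+j = j+l+1 by omega) rfl,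
      chval (F := F) (i+1+0+1) (i+1+1) 1 (by simp),
      chpascal (F := F) (i+1) i (show i+1+0+1 = (i+1)+1 by omega) rfl,
      chval (F := F) (i+1) (i+1) 1 (Nat.choose_self _)]
    simp only [CharTwo.sub_eq_add, CharTwo.neg_eq]
    push_cast
    ring
  · -- i = i+1, k = k+1
    simp only [wittBr, sZ_def', dpD1_single, dpD2_single, dpMul_single]
    refine single_combine (pe _ _ _ _ (by omega) (by omega)) (pe _ _ _ _ (by omega) (by omega))
      (pe _ _ _ _ (by omega) (by omega)) (pe _ _ _ _ (by omega) (by omega)) ?_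
    simp only [sGamma]
    rw [chcast (F := F) (show i+1+1+k = i+1+(k+1) by omega) (rfl : i+1+1 = i+1+1),
      chpascal_ite (F := F) j l (show j+(l+1) = j+l+1 by omega) rfl,
      chpascal (F := F) (j+l) j (show j+1+l = (j+l)+1 by omega) rfl,
      chcast (F := F) (show k+1+1+i = i+1+(k+1) by omega) (rfl : k+1+1 = k+1+1),
      chsymm (F := F) (show (k+1+1)+i = i+1+(k+1) by omega),
      chsymm (F := F) (rfl : l+(j+1) = l+(j+1)),
      chpascal (F := F) (j+l) j (show l+(j+1) = (j+l)+1 by omega) rfl,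
      chcast (F := F) (show k+1+(i+1) = i+1+(k+1) by omega) (rfl : k+1 = k+1),
      chsymm (F := F) (show (k+1)+(i+1) = i+1+(k+1) by omega),
      chsymm (F := F) (rfl : (l+1)+j = l+1+j),
      chpascal_ite (F := F) j l (show l+1+j = j+l+1 by omega) rfl,
      chpascal (F := F) (i+1+(k+1)) (i+1) (rfl : i+1+(k+1)+1 = i+1+(k+1)+1) rfl,
      chpascal (F := F) (i+1+(k+1)) i (rfl : i+1+(k+1)+1 = i+1+(k+1)+1) rfl]
    simp only [CharTwo.sub_eq_add, CharTwo.neg_eq]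
    push_cast
    ring

lemma wittBr_sZ {F : Type*} [Field F] [CharP F 2] (i j k l : ℕ) :
    wittBr (sZ (F := F) i j) (sZ k l) = sGamma (F := F) i j k l • sZ (i + k) (j + l) := by
  have h1 := comp1 (F := F) i j k l
  have h2 := comp2 (F := F) i j k l
  rw [Prod.ext_iff]
  constructor
  · rw [h1]
    show _ = sGamma (F := F) i j k l • (Pi.single (i + k + 1, j + l) 1 : ℕ × ℕ → F)
    rw [smul_single, mul_one]
  · rw [h2]
    show _ = sGamma (F := F) i j k l • (-Pi.single (i + k, j + l + 1) 1 : ℕ × ℕ → F)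
    rw [smul_neg, smul_single, mul_one, ← Pi.single_neg, CharTwo.neg_eq]

lemma two_dvd_choose {m a b : ℕ} (ha : a < 2 ^ m) (hb : b < 2 ^ m) (hab : 2 ^ m ≤ a + b) :
    2 ∣ (a + b).choose a := by
  haveI : Fact (Nat.Prime 2) := ⟨Nat.prime_two⟩
  have hm : 1 ≤ m := by
    by_contra h
    interval_cases m <;> omega
  have hlog : m ≤ Nat.log 2 (b + a) := Nat.le_log_of_pow_le one_lt_two (by omega)
  have hkum := padicValNat_choose' (p := 2) (n := b) (k := a) (b := Nat.log 2 (b + a) + 1)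
    (by omega)
  have hmem : m ∈ Finset.filter (fun i => 2 ^ i ≤ a % 2 ^ i + b % 2 ^ i)
      (Finset.Ico 1 (Nat.log 2 (b + a) + 1)) := by
    simp only [Finset.mem_filter, Finset.mem_Ico]
    refine ⟨⟨hm, by omega⟩, ?_⟩
    rw [Nat.mod_eq_of_lt ha, Nat.mod_eq_of_lt hb]
    omega
  have hpos : 1 ≤ padicValNat 2 ((b + a).choose a) := by
    rw [hkum]
    exact Finset.card_pos.mpr ⟨m, hmem⟩
  have hdvd : 2 ∣ (b + a).choose a := by
    have hp := pow_padicValNat_dvd (p := 2) (n := (b + a).choose a)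
    calc (2 : ℕ) = 2 ^ 1 := (pow_one 2).symm
    _ ∣ 2 ^ padicValNat 2 ((b + a).choose a) := pow_dvd_pow 2 hpos
    _ ∣ (b + a).choose a := hp
  rwa [show a + b = b + a by omega]

lemma chzero {F : Type*} [Field F] [CharP F 2] {m n t : ℕ} (ht : t < 2 ^ m)
    (h2 : n - t < 2 ^ m) (h1 : 2 ^ m ≤ n) (hle : t ≤ n) : ((n.choose t : ℕ) : F) = 0 := by
  have := two_dvd_choose (m := m) (a := t) (b := n - t) ht h2 (by omega)
  rw [show t + (n - t) = n by omega] at this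
  obtain ⟨c, hc⟩ := this
  rw [hc]
  push_cast
  rw [CharTwo.two_eq_zero]
  ring

lemma gamma_zero1 {F : Type*} [Field F] [CharP F 2] {m1 : ℕ} (i j k l : ℕ)
    (hi : i ≤ 2 ^ m1 - 2) (hk : k ≤ 2 ^ m1 - 2) (hm : 1 ≤ m1) (h : 2 ^ m1 - 2 < i + k) :
    sGamma (F := F) i j k l = 0 := by
  have h2 : 2 ≤ 2 ^ m1 := by
    calc 2 = 2 ^ 1 := (pow_one 2).symm
    _ ≤ 2 ^ m1 := Nat.pow_le_pow_right (by omega) hm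
  have c1 : (((i + k + 1).choose (i + 1) : ℕ) : F) = 0 :=
    chzero (m := m1) (by omega) (by omega) (by omega) (by omega)
  have c2 : (((i + k + 1).choose i : ℕ) : F) = 0 :=
    chzero (m := m1) (by omega) (by omega) (by omega) (by omega)
  rw [sGamma, c1, c2]
  ring

lemma gamma_zero2 {F : Type*} [Field F] [CharP F 2] {m2 : ℕ} (i j k l : ℕ)
    (hj : j ≤ 2 ^ m2 - 2) (hl : l ≤ 2 ^ m2 - 2) (hm : 1 ≤ m2) (h : 2 ^ m2 - 2 < j + l) :
    sGamma (F := F) i j k l = 0 := by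
  have h2 : 2 ≤ 2 ^ m2 := by
    calc 2 = 2 ^ 1 := (pow_one 2).symm
    _ ≤ 2 ^ m2 := Nat.pow_le_pow_right (by omega) hm
  have hj1 : 1 ≤ j := by omega
  have w0 : (((j + l).choose j : ℕ) : F) + (((j + l).choose (j - 1) : ℕ) : F) = 0 := by
    have hp : (((j + l + 1).choose j : ℕ) : F) =
        (((j + l).choose (j - 1) : ℕ) : F) + (((j + l).choose j : ℕ) : F) := by
      rw [chcast (F := F) (show j + l + 1 = (j + l) + 1 by omega)
        (show j = (j - 1) + 1 by omega), chpascal (F := F) (j + l) (j - 1) rfl rfl,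
        chcast (F := F) (rfl : j + l = j + l) (show j - 1 + 1 = j by omega)]
    have hz : (((j + l + 1).choose j : ℕ) : F) = 0 :=
      chzero (m := m2) (by omega) (by omega) (by omega) (by omega)
    rw [hz] at hp
    linear_combination -hp
  have w1 : (((j + l).choose (j + 1) : ℕ) : F) + (((j + l).choose j : ℕ) : F) = 0 := by
    have hp : (((j + l + 1).choose (j + 1) : ℕ) : F) =
        (((j + l).choose j : ℕ) : F) + (((j + l).choose (j + 1) : ℕ) : F) :=
      chpascal (F := F) (j + l) j rfl rfl
    have hz : (((j + l + 1).choose (j + 1) : ℕ) : F) = 0 :=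
      chzero (m := m2) (by omega) (by omega) (by omega) (by omega)
    rw [hz] at hp
    linear_combination -hp
  rw [sGamma, if_neg (by omega : ¬ j = 0), w1, w0]
  ring


/-- In the special algebra `S = S(2,(m₁,m₂))` over a field of
characteristic 2, `[z_{ij}, z_{kl}] = γ_{ijkl} z_{i+k, j+l}` (with `z` zero for
indices outside the range). -/
theorem special_bracket_zz
    (F : Type*) [Field F] [CharP F 2] (m1 m2 : ℕ) (hm1 : 1 ≤ m1) (hm2 : 1 ≤ m2) :
    ∀ i j k l, i ≤ 2 ^ m1 - 2 → k ≤ 2 ^ m1 - 2 → j ≤ 2 ^ m2 - 2 → l ≤ 2 ^ m2 - 2 →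
      wittBr (sZ (F := F) i j) (sZ k l) = sGamma (F := F) i j k l • sZext (F := F) m1 m2 (i + k) (j + l) := by
  intro i j k l hi hk hj hl
  rw [wittBr_sZ]
  by_cases h : i + k ≤ 2 ^ m1 - 2 ∧ j + l ≤ 2 ^ m2 - 2
  · rw [sZext, if_pos h]
  · rw [sZext, if_neg h, smul_zero]
    have hγ : sGamma (F := F) i j k l = 0 := by
      rcases not_and_or.mp h with h' | h'
      · exact gamma_zero1 i j k l hi hk hm1 (by omega)
      · exact gamma_zero2 i j k l hj hl hm2 (by omega)
    rw [hγ, zero_smul]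
end

section
/- Let S = S(2,(m_1,m_2)) be the special algebra over a field of characteristic 2 with (m_1,m_2) ≠ (1,1). Then the derived subalgebra S' has codimension exactly 1 in S; in particular, the element z_{2^{m_1}-2, 2^{m_2}-2} does not lie in S'. -/
/-- Binomial coefficients `C(2^m - 1, t)` are all odd. -/
lemma choose_pow_sub_one_odd (m t : ℕ) (ht : t ≤ 2 ^ m - 1) :
    Nat.choose (2 ^ m - 1) t % 2 = 1 := by
  induction t with
  | zero => simp
  | succ t ih =>
    have h2 : 1 ≤ 2 ^ m := Nat.one_le_two_pow
    have hp : (2 ^ m - 1) + 1 = 2 ^ m := by omega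
    have heven : 2 ∣ Nat.choose (2 ^ m) (t + 1) :=
      Nat.Prime.dvd_choose_pow Nat.prime_two (by omega) (by omega)
    have hpas : Nat.choose ((2 ^ m - 1) + 1) (t + 1)
        = Nat.choose (2 ^ m - 1) t + Nat.choose (2 ^ m - 1) (t + 1) :=
      Nat.choose_succ_succ _ _
    rw [hp] at hpas
    have := ih (by omega)
    omega

/-- Parity of `C(2^m - 2, t)`. -/
lemma choose_pow_sub_two_mod (m t : ℕ) (hm : 1 ≤ m) :
    Nat.choose (2 ^ m - 2) t % 2 = if t % 2 = 0 ∧ t ≤ 2 ^ m - 2 then 1 else 0 := by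
  have h2 : 2 ≤ 2 ^ m := by
    calc 2 = 2 ^ 1 := rfl
    _ ≤ 2 ^ m := Nat.pow_le_pow_right (by norm_num) hm
  induction t with
  | zero => simp
  | succ t ih =>
    by_cases hle : t + 1 ≤ 2 ^ m - 2
    · have hp : (2 ^ m - 2) + 1 = 2 ^ m - 1 := by omega
      have hodd : Nat.choose (2 ^ m - 1) (t + 1) % 2 = 1 :=
        choose_pow_sub_one_odd m (t + 1) (by omega)
      have hpas : Nat.choose ((2 ^ m - 2) + 1) (t + 1)
          = Nat.choose (2 ^ m - 2) t + Nat.choose (2 ^ m - 2) (t + 1) :=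
        Nat.choose_succ_succ _ _
      rw [hp] at hpas
      by_cases hpar : t % 2 = 0
      · rw [if_neg (by omega)]
        rw [if_pos ⟨hpar, by omega⟩] at ih
        omega
      · rw [if_pos ⟨by omega, hle⟩]
        rw [if_neg (by omega)] at ih
        omega
    · rw [Nat.choose_eq_zero_of_lt (by omega), if_neg (by omega)]

lemma cast_eq_one_of_mod {F : Type*} [Field F] [CharP F 2] (n : ℕ) (h : n % 2 = 1) :
    (n : F) = 1 := by
  conv_lhs => rw [← Nat.div_add_mod n 2]
  push_cast
  rw [h, CharTwo.two_eq_zero]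
  ring

lemma cast_eq_zero_of_mod {F : Type*} [Field F] [CharP F 2] (n : ℕ) (h : n % 2 = 0) :
    (n : F) = 0 := by
  conv_lhs => rw [← Nat.div_add_mod n 2]
  push_cast
  rw [h, CharTwo.two_eq_zero]
  ring

lemma sGamma_eq_zero {F : Type*} [Field F] [CharP F 2] (m1 m2 : ℕ)
    (hm1 : 1 ≤ m1) (hm2 : 1 ≤ m2) (i j k l : ℕ)
    (hik : i + k = 2 ^ m1 - 2) (hjl : j + l = 2 ^ m2 - 2) :
    sGamma (F := F) i j k l = 0 := by
  have h21 : 2 ≤ 2 ^ m1 := by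
    calc 2 = 2 ^ 1 := rfl
    _ ≤ 2 ^ m1 := Nat.pow_le_pow_right (by norm_num) hm1
  have h22 : 2 ≤ 2 ^ m2 := by
    calc 2 = 2 ^ 1 := rfl
    _ ≤ 2 ^ m2 := Nat.pow_le_pow_right (by norm_num) hm2
  have hN2even : (2 ^ m2 - 2) % 2 = 0 := by
    have : 2 ^ m2 = 2 * 2 ^ (m2 - 1) := by
      rw [← pow_succ']
      congr 1
      omega
    omega
  have hc1 : (Nat.choose (i + k + 1) (i + 1) : F) = 1 := by
    apply cast_eq_one_of_mod
    have : i + k + 1 = 2 ^ m1 - 1 := by omega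
    rw [this]
    exact choose_pow_sub_one_odd m1 (i + 1) (by omega)
  have hc2 : (Nat.choose (i + k + 1) i : F) = 1 := by
    apply cast_eq_one_of_mod
    have : i + k + 1 = 2 ^ m1 - 1 := by omega
    rw [this]
    exact choose_pow_sub_one_odd m1 i (by omega)
  unfold sGamma
  rw [hc1, hc2, one_mul, one_mul, CharTwo.sub_eq_add]
  rw [hjl]
  by_cases hj : j = 0
  · subst hj
    rw [if_pos rfl]
    have hb : (Nat.choose (2 ^ m2 - 2) (0 + 1) : F) = 0 := by
      apply cast_eq_zero_of_mod
      rw [choose_pow_sub_two_mod m2 _ hm2, if_neg (by omega)]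
    rw [hb, add_zero, zero_add, CharTwo.add_self_eq_zero]
  · rw [if_neg hj]
    have hjle : j ≤ 2 ^ m2 - 2 := by omega
    have key : (Nat.choose (2 ^ m2 - 2) (j - 1) : F) = (Nat.choose (2 ^ m2 - 2) (j + 1) : F) := by
      by_cases hpar : j % 2 = 1
      · rw [cast_eq_one_of_mod _ (by rw [choose_pow_sub_two_mod m2 _ hm2, if_pos ⟨by omega, by omega⟩]),
          cast_eq_one_of_mod _ (by rw [choose_pow_sub_two_mod m2 _ hm2, if_pos ⟨by omega, by omega⟩])]
      · rw [cast_eq_zero_of_mod _ (by rw [choose_pow_sub_two_mod m2 _ hm2, if_neg (by omega)]),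
          cast_eq_zero_of_mod _ (by rw [choose_pow_sub_two_mod m2 _ hm2, if_neg (by omega)])]
    rw [key]
    have : ∀ a b : F, a + b + (b + a) = 0 := by
      intro a b
      rw [add_comm b a, CharTwo.add_self_eq_zero]
    exact this _ _

/-- For the special algebra `S = S(2,(m₁,m₂))` over a field of
characteristic 2 with `(m₁,m₂) ≠ (1,1)`, the derived subalgebra `S'` has
codimension exactly 1 in `S`; in particular `z_{2^{m₁}-2, 2^{m₂}-2} ∉ S'`. -/
theorem special_derived_codim_one
    (F : Type*) [Field F] [CharP F 2] (m1 m2 : ℕ)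
    (L : Type*) [LieRing L] [LieAlgebra F L]
    (x y : ℕ → L) (z : ℕ → ℕ → L)
    -- basis elements, extended by zero outside their index ranges:
    (hx0 : ∀ j, 2 ^ m2 - 2 < j → x j = 0)
    (hy0 : ∀ i, 2 ^ m1 - 2 < i → y i = 0)
    (hz0 : ∀ i j, 2 ^ m1 - 2 < i ∨ 2 ^ m2 - 2 < j → z i j = 0)
    (hspan : Submodule.span F
      (Set.range x ∪ Set.range y ∪ {w | ∃ i j, w = z i j}) = ⊤)
    (hdim : Module.finrank F L = 2 ^ (m1 + m2) - 1)
    -- the bracket relations of S(2,(m1,m2)):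
    (hxx : ∀ i j, ⁅x i, x j⁆ = 0)
    (hyy : ∀ i j, ⁅y i, y j⁆ = 0)
    (hzz : ∀ i j k l, i ≤ 2 ^ m1 - 2 → k ≤ 2 ^ m1 - 2 → j ≤ 2 ^ m2 - 2 → l ≤ 2 ^ m2 - 2 →
      ⁅z i j, z k l⁆ = sGamma (F := F) i j k l • z (i + k) (j + l))
    (hx0y : ∀ i, 1 ≤ i → i ≤ 2 ^ m1 - 2 → ⁅x 0, y i⁆ = y (i - 1))
    (hx0y0 : ⁅x 0, y 0⁆ = 0)
    (hy0x : ∀ j, 1 ≤ j → j ≤ 2 ^ m2 - 2 → ⁅y 0, x j⁆ = x (j - 1))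
    (hy0x0 : ⁅y 0, x 0⁆ = 0)
    (hxy : ∀ i j, 1 ≤ i → i ≤ 2 ^ m2 - 2 → 1 ≤ j → j ≤ 2 ^ m1 - 2 →
      ⁅x i, y j⁆ = z (j - 1) (i - 1))
    (hxz0 : ∀ i k, i ≤ 2 ^ m2 - 2 → k ≤ 2 ^ m2 - 2 →
      ⁅x i, z 0 k⁆ = (Nat.choose (i + k + 1) i : F) • x (i + k))
    (hxz : ∀ i j k, i ≤ 2 ^ m2 - 2 → k ≤ 2 ^ m2 - 2 → 1 ≤ j → j ≤ 2 ^ m1 - 2 →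
      ⁅x i, z j k⁆ = (Nat.choose (i + k + 1) i : F) • z (j - 1) (i + k))
    (hyz0 : ∀ i j, i ≤ 2 ^ m1 - 2 → j ≤ 2 ^ m1 - 2 →
      ⁅y i, z j 0⁆ = (Nat.choose (i + j + 1) i : F) • y (i + j))
    (hyz : ∀ i j k, i ≤ 2 ^ m1 - 2 → j ≤ 2 ^ m1 - 2 → 1 ≤ k → k ≤ 2 ^ m2 - 2 →
      ⁅y i, z j k⁆ = (Nat.choose (i + j + 1) i : F) • z (i + j) (k - 1))
    (hm1 : 1 ≤ m1) (hm2 : 1 ≤ m2) (hne : ¬(m1 = 1 ∧ m2 = 1)) :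
    z (2 ^ m1 - 2) (2 ^ m2 - 2) ∉ LieAlgebra.derivedSeries F L 1 ∧
      Module.finrank F (LieAlgebra.derivedSeries F L 1) = 2 ^ (m1 + m2) - 2 := by
  classical
  have h21 : 2 ≤ 2 ^ m1 := by
    calc 2 = 2 ^ 1 := rfl
    _ ≤ 2 ^ m1 := Nat.pow_le_pow_right (by norm_num) hm1
  have h22 : 2 ≤ 2 ^ m2 := by
    calc 2 = 2 ^ 1 := rfl
    _ ≤ 2 ^ m2 := Nat.pow_le_pow_right (by norm_num) hm2
  set N1 := 2 ^ m1 - 2 with hN1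
  set N2 := 2 ^ m2 - 2 with hN2
  set T : Set L := Set.range x ∪ Set.range y ∪ {w | ∃ i j, w = z i j} with hT
  set sz : Finset (ℕ × ℕ) := (Finset.range (N1 + 1) ×ˢ Finset.range (N2 + 1)).erase (N1, N2)
    with hsz
  set B : Finset L := ((Finset.range (N2 + 1)).image x) ∪ ((Finset.range (N1 + 1)).image y)
    ∪ sz.image (fun p => z p.1 p.2) with hB
  set M : Submodule F L := Submodule.span F (B : Set L) with hM
  -- membership helpers
  have hxM : ∀ i, x i ∈ M := by
    intro i
    by_cases hi : i ≤ N2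
    · exact Submodule.subset_span (by
        simp only [hB, Finset.coe_union, Set.mem_union, Finset.mem_coe, Finset.mem_image,
          Finset.mem_range]
        exact Or.inl (Or.inl ⟨i, by omega, rfl⟩))
    · rw [hx0 i (by omega)]; exact zero_mem _
  have hyM : ∀ i, y i ∈ M := by
    intro i
    by_cases hi : i ≤ N1
    · exact Submodule.subset_span (by
        simp only [hB, Finset.coe_union, Set.mem_union, Finset.mem_coe, Finset.mem_image,
          Finset.mem_range]
        exact Or.inl (Or.inr ⟨i, by omega, rfl⟩))
    · rw [hy0 i (by omega)]; exact zero_mem _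
  have hzM : ∀ i j, ¬(i = N1 ∧ j = N2) → z i j ∈ M := by
    intro i j hij
    by_cases hi : i ≤ N1 ∧ j ≤ N2
    · refine Submodule.subset_span ?_
      simp only [hB, Finset.coe_union, Set.mem_union, Finset.mem_coe, Finset.mem_image]
      refine Or.inr ⟨(i, j), ?_, rfl⟩
      simp only [hsz, Finset.mem_erase, Finset.mem_product, Finset.mem_range]
      exact ⟨by simpa using fun h1 h2 => hij ⟨h1, h2⟩, by omega, by omega⟩
    · rw [hz0 i j (by omega)]; exact zero_mem _
  -- brackets of generators lie in M
  have hXY : ∀ i j, ⁅x i, y j⁆ ∈ M := by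
    intro i j
    by_cases hi2 : i ≤ N2
    · by_cases hj1 : j ≤ N1
      · rcases Nat.eq_zero_or_pos i with hi | hi
        · subst hi
          rcases Nat.eq_zero_or_pos j with hj | hj
          · subst hj; rw [hx0y0]; exact zero_mem _
          · rw [hx0y j hj hj1]; exact hyM _
        · rcases Nat.eq_zero_or_pos j with hj | hj
          · subst hj
            rw [← lie_skew, hy0x i hi hi2]
            exact neg_mem (hxM _)
          · rw [hxy i j hi hi2 hj hj1]
            exact hzM _ _ (by omega)
      · rw [hy0 j (by omega), lie_zero]; exact zero_mem _
    · rw [hx0 i (by omega), zero_lie]; exact zero_mem _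
  have hXZ : ∀ i j k, ⁅x i, z j k⁆ ∈ M := by
    intro i j k
    by_cases hi : i ≤ N2
    · by_cases hjk : j ≤ N1 ∧ k ≤ N2
      · rcases Nat.eq_zero_or_pos j with hj | hj
        · subst hj
          rw [hxz0 i k hi hjk.2]
          exact Submodule.smul_mem _ _ (hxM _)
        · rw [hxz i j k hi hjk.2 hj hjk.1]
          exact Submodule.smul_mem _ _ (hzM _ _ (by omega))
      · rw [hz0 j k (by omega), lie_zero]; exact zero_mem _
    · rw [hx0 i (by omega), zero_lie]; exact zero_mem _
  have hYZ : ∀ i j k, ⁅y i, z j k⁆ ∈ M := by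
    intro i j k
    by_cases hi : i ≤ N1
    · by_cases hjk : j ≤ N1 ∧ k ≤ N2
      · rcases Nat.eq_zero_or_pos k with hk | hk
        · subst hk
          rw [hyz0 i j hi hjk.1]
          exact Submodule.smul_mem _ _ (hyM _)
        · rw [hyz i j k hi hjk.1 hk hjk.2]
          exact Submodule.smul_mem _ _ (hzM _ _ (by omega))
      · rw [hz0 j k (by omega), lie_zero]; exact zero_mem _
    · rw [hy0 i (by omega), zero_lie]; exact zero_mem _
  have hZZ : ∀ i j k l, ⁅z i j, z k l⁆ ∈ M := by
    intro i j k l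
    by_cases hb : i ≤ N1 ∧ j ≤ N2 ∧ k ≤ N1 ∧ l ≤ N2
    · rw [hzz i j k l hb.1 hb.2.2.1 hb.2.1 hb.2.2.2]
      by_cases htop2 : i + k = N1 ∧ j + l = N2
      · rw [sGamma_eq_zero m1 m2 hm1 hm2 i j k l htop2.1 htop2.2, zero_smul]
        exact zero_mem _
      · exact Submodule.smul_mem _ _ (hzM _ _ (by omega))
    · rcases (by omega : ¬(i ≤ N1 ∧ j ≤ N2) ∨ ¬(k ≤ N1 ∧ l ≤ N2)) with h | h
      · rw [hz0 i j (by omega), zero_lie]; exact zero_mem _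
      · rw [hz0 k l (by omega), lie_zero]; exact zero_mem _
  have hbase : ∀ u ∈ T, ∀ v ∈ T, ⁅u, v⁆ ∈ M := by
    rintro u ((⟨i, rfl⟩ | ⟨i, rfl⟩) | ⟨i, j, rfl⟩) v ((⟨k, rfl⟩ | ⟨k, rfl⟩) | ⟨k, l, rfl⟩)
    · rw [hxx]; exact zero_mem _
    · exact hXY _ _
    · exact hXZ _ _ _
    · rw [← lie_skew]; exact neg_mem (hXY _ _)
    · rw [hyy]; exact zero_mem _
    · exact hYZ _ _ _
    · rw [← lie_skew]; exact neg_mem (hXZ _ _ _)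
    · rw [← lie_skew]; exact neg_mem (hYZ _ _ _)
    · exact hZZ _ _ _ _
  have hsp : ∀ v : L, v ∈ Submodule.span F T := by
    intro v; rw [hspan]; trivial
  have key1 : ∀ u ∈ T, ∀ b : L, ⁅u, b⁆ ∈ M := by
    intro u hu b
    have hb := hsp b
    induction hb using Submodule.span_induction with
    | mem v hv => exact hbase u hu v hv
    | zero => rw [lie_zero]; exact zero_mem _
    | add v w _ _ h1 h2 => rw [lie_add]; exact add_mem h1 h2
    | smul c v _ h => rw [lie_smul]; exact Submodule.smul_mem _ _ h
  have key : ∀ a b : L, ⁅a, b⁆ ∈ M := by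
    intro a b
    have ha := hsp a
    induction ha using Submodule.span_induction with
    | mem u hu => exact key1 u hu b
    | zero => rw [zero_lie]; exact zero_mem _
    | add u w _ _ h1 h2 => rw [add_lie]; exact add_mem h1 h2
    | smul c u _ h => rw [smul_lie]; exact Submodule.smul_mem _ _ h
  -- the derived series
  have h1 : LieAlgebra.derivedSeries F L 1 = ⁅(⊤ : LieIdeal F L), (⊤ : LieIdeal F L)⁆ := by
    rw [LieAlgebra.derivedSeries_def, LieAlgebra.derivedSeriesOfIdeal_succ,
      LieAlgebra.derivedSeriesOfIdeal_zero]
  have hsub : LieSubmodule.toSubmodule (LieAlgebra.derivedSeries F L 1) ≤ M := by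
    rw [h1, LieSubmodule.lieIdeal_oper_eq_linear_span']
    rw [Submodule.span_le]
    rintro m ⟨a, -, b, -, rfl⟩
    exact key a b
  have hbrack : ∀ a b : L, ⁅a, b⁆ ∈ LieAlgebra.derivedSeries F L 1 := by
    intro a b
    rw [h1]
    exact LieSubmodule.lie_mem_lie (LieSubmodule.mem_top _) (LieSubmodule.mem_top _)
  have hxS : ∀ j, j ≤ N2 → x j ∈ LieAlgebra.derivedSeries F L 1 := by
    intro j hj
    have h2 : ⁅x 0, z 0 j⁆ = x j := by
      rw [hxz0 0 j (by omega) hj, Nat.choose_zero_right, Nat.cast_one, one_smul, zero_add]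
    exact h2 ▸ hbrack _ _
  have hyS : ∀ i, i ≤ N1 → y i ∈ LieAlgebra.derivedSeries F L 1 := by
    intro i hi
    have h2 : ⁅y 0, z i 0⁆ = y i := by
      rw [hyz0 0 i (by omega) hi, Nat.choose_zero_right, Nat.cast_one, one_smul, zero_add]
    exact h2 ▸ hbrack _ _
  have hzS : ∀ i j, i ≤ N1 → j ≤ N2 → ¬(i = N1 ∧ j = N2) →
      z i j ∈ LieAlgebra.derivedSeries F L 1 := by
    intro i j hi hj hij
    by_cases hiN : i < N1
    · have h2 : ⁅x 0, z (i + 1) j⁆ = z i j := by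
        rw [hxz 0 (i + 1) j (by omega) hj (by omega) (by omega), Nat.choose_zero_right,
          Nat.cast_one, one_smul, zero_add, Nat.add_sub_cancel]
      exact h2 ▸ hbrack _ _
    · have hjN : j < N2 := by omega
      have h2 : ⁅y 0, z i (j + 1)⁆ = z i j := by
        rw [hyz 0 i (j + 1) (by omega) hi (by omega) (by omega), Nat.choose_zero_right,
          Nat.cast_one, one_smul, zero_add, Nat.add_sub_cancel]
      exact h2 ▸ hbrack _ _
  have hsup : M ≤ LieSubmodule.toSubmodule (LieAlgebra.derivedSeries F L 1) := by
    rw [hM, Submodule.span_le]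
    intro w hw
    simp only [hB, Finset.coe_union, Set.mem_union, Finset.mem_coe, Finset.mem_image,
      Finset.mem_range] at hw
    rw [SetLike.mem_coe, LieSubmodule.mem_toSubmodule]
    rcases hw with (⟨j, hj, rfl⟩ | ⟨i, hi, rfl⟩) | ⟨⟨i, j⟩, hij, rfl⟩
    · exact hxS j (by omega)
    · exact hyS i (by omega)
    · simp only [hsz, Finset.mem_erase, Finset.mem_product, Finset.mem_range] at hij
      refine hzS i j (by omega) (by omega) ?_
      rintro ⟨rfl, rfl⟩
      exact hij.1 rfl
  -- spanning with the extra element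
  have hspan2 : Submodule.span F (insert (z N1 N2) (B : Set L)) = ⊤ := by
    refine le_antisymm le_top ?_
    rw [← hspan, Submodule.span_le]
    rintro w ((⟨i, rfl⟩ | ⟨i, rfl⟩) | ⟨i, j, rfl⟩)
    · exact Submodule.span_mono (Set.subset_insert _ _) (hxM i)
    · exact Submodule.span_mono (Set.subset_insert _ _) (hyM i)
    · by_cases hij : i = N1 ∧ j = N2
      · rcases hij with ⟨rfl, rfl⟩
        exact Submodule.subset_span (Set.mem_insert _ _)
      · exact Submodule.span_mono (Set.subset_insert _ _) (hzM i j hij)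
  have hfd : FiniteDimensional F L := by
    refine ⟨⟨insert (z N1 N2) B, ?_⟩⟩
    rw [Finset.coe_insert]
    exact hspan2
  -- cardinality bound
  have hcard : B.card ≤ 2 ^ (m1 + m2) - 2 := by
    obtain ⟨a, ha⟩ : ∃ a, 2 ^ m1 = a + 2 := ⟨2 ^ m1 - 2, by omega⟩
    obtain ⟨b, hb⟩ : ∃ b, 2 ^ m2 = b + 2 := ⟨2 ^ m2 - 2, by omega⟩
    have hpow : 2 ^ (m1 + m2) = (a + 2) * (b + 2) := by rw [pow_add, ha, hb]
    have hszcard : sz.card = (N1 + 1) * (N2 + 1) - 1 := by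
      rw [hsz, Finset.card_erase_of_mem (by
        simp only [Finset.mem_product, Finset.mem_range]; omega),
        Finset.card_product, Finset.card_range, Finset.card_range]
    have h1c : B.card ≤ (N2 + 1) + (N1 + 1) + ((N1 + 1) * (N2 + 1) - 1) := by
      calc B.card ≤ (((Finset.range (N2 + 1)).image x) ∪
            ((Finset.range (N1 + 1)).image y)).card + (sz.image (fun p => z p.1 p.2)).card :=
            Finset.card_union_le _ _
      _ ≤ (((Finset.range (N2 + 1)).image x).card + ((Finset.range (N1 + 1)).image y).card)
            + (sz.image (fun p => z p.1 p.2)).card := by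
            exact Nat.add_le_add_right (Finset.card_union_le _ _) _
      _ ≤ ((N2 + 1) + (N1 + 1)) + ((N1 + 1) * (N2 + 1) - 1) := by
            refine Nat.add_le_add (Nat.add_le_add ?_ ?_) ?_
            · exact le_trans (Finset.card_image_le) (by rw [Finset.card_range])
            · exact le_trans (Finset.card_image_le) (by rw [Finset.card_range])
            · exact le_trans (Finset.card_image_le) (by rw [hszcard])
      _ = (N2 + 1) + (N1 + 1) + ((N1 + 1) * (N2 + 1) - 1) := by ring_nf
    have hN1a : N1 = a := by omega
    have hN2b : N2 = b := by omega
    rw [hN1a, hN2b] at h1c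
    have e1 : (a + 1) * (b + 1) = a * b + a + b + 1 := by ring
    have e2 : (a + 2) * (b + 2) = a * b + 2 * a + 2 * b + 4 := by ring
    omega
  have hrankM_le : Module.finrank F M ≤ 2 ^ (m1 + m2) - 2 :=
    le_trans (finrank_span_finset_le_card B) hcard
  have h4 : 4 ≤ 2 ^ (m1 + m2) := by
    rw [pow_add]; nlinarith
  have hrankM_ge : 2 ^ (m1 + m2) - 2 ≤ Module.finrank F M := by
    have htople : (⊤ : Submodule F L) ≤ M ⊔ Submodule.span F {z N1 N2} := by
      rw [← hspan2, Submodule.span_insert, sup_comm]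
    have htopeq : M ⊔ Submodule.span F {z N1 N2} = ⊤ := le_antisymm le_top htople
    have hs1 : Module.finrank F (Submodule.span F ({z N1 N2} : Set L)) ≤ 1 := by
      have := finrank_span_finset_le_card (R := F) ({z N1 N2} : Finset L)
      rw [Finset.coe_singleton, Finset.card_singleton] at this
      exact this
    have := Submodule.finrank_sup_add_finrank_inf_eq M (Submodule.span F {z N1 N2})
    rw [htopeq, finrank_top] at this
    omega
  -- equality of submodules
  have hMeq : LieSubmodule.toSubmodule (LieAlgebra.derivedSeries F L 1) = M :=
    le_antisymm hsub hsup
  constructor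
  · intro hmem
    have hzM' : z N1 N2 ∈ M := by
      rw [← hMeq]
      exact (LieSubmodule.mem_toSubmodule _).2 hmem
    have : (⊤ : Submodule F L) ≤ M := by
      rw [← hspan2, Submodule.span_le, Set.insert_subset_iff]
      exact ⟨hzM', Submodule.subset_span⟩
    have hMtop : M = ⊤ := le_antisymm le_top this
    rw [hMtop, finrank_top, hdim] at hrankM_le
    omega
  · have : Module.finrank F (LieAlgebra.derivedSeries F L 1) =
        Module.finrank F (LieSubmodule.toSubmodule (LieAlgebra.derivedSeries F L 1)) := rfl
    rw [this, hMeq]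
    omega
end

section
/- Let S = S(2,(m_1,m_2)) be the special algebra over a field of characteristic 2 with m_1, m_2 ≥ 2. Then the derived subalgebra S' is a simple Lie algebra of dimension 2^{m_1+m_2} - 2. -/
section SpecialAux

lemma lucas2 (n k : ℕ) : ((n.choose k : ZMod 2)) =
    ((n % 2).choose (k % 2) : ZMod 2) * ((n / 2).choose (k / 2) : ZMod 2) := by
  have h := @Choose.choose_modEq_choose_mod_mul_choose_div n k 2 ⟨Nat.prime_two⟩
  have h2 := (ZMod.intCast_eq_intCast_iff _ _ _).mpr h
  push_cast at h2
  exact_mod_cast h2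

lemma zmod_pow_sub_one (m : ℕ) : ∀ r ≤ 2^m - 1, (((2^m - 1).choose r : ZMod 2)) = 1 := by
  induction m with
  | zero => intro r hr; interval_cases r; simp
  | succ m ih =>
      intro r hr
      have h2 : (1:ℕ) ≤ 2^m := Nat.one_le_two_pow
      have hn : (2^(m+1) - 1) % 2 = 1 ∧ (2^(m+1) - 1) / 2 = 2^m - 1 := by
        have : 2^(m+1) = 2 * 2^m := by ring
        omega
      rw [lucas2, hn.1, hn.2]
      have hr2 : r / 2 ≤ 2^m - 1 := by
        have : 2^(m+1) = 2 * 2^m := by ring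
        omega
      rw [ih _ hr2]
      have : r % 2 = 0 ∨ r % 2 = 1 := Nat.mod_two_eq_zero_or_one r
      rcases this with h | h <;> simp [h]

lemma zmod_odd_idx (m j : ℕ) (hm : 1 ≤ m) (hj : j % 2 = 1) :
    (((2^m - 2).choose j : ZMod 2)) = 0 := by
  have h2 : (2:ℕ) ≤ 2^m := by
    calc (2:ℕ) = 2^1 := rfl
    _ ≤ 2^m := Nat.pow_le_pow_right (by norm_num) hm
  have hn : (2^m - 2) % 2 = 0 := by
    obtain ⟨m', rfl⟩ := Nat.exists_eq_add_of_le hm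
    have : 2^(1+m') = 2 * 2^m' := by ring
    omega
  rw [lucas2, hn, hj]
  simp

lemma zmod_even_idx (m j : ℕ) (hm : 1 ≤ m) (hj : j % 2 = 0) (hj2 : j ≤ 2^m - 2) :
    (((2^m - 2).choose j : ZMod 2)) = 1 := by
  obtain ⟨m', rfl⟩ := Nat.exists_eq_add_of_le hm
  have h2 : (1:ℕ) ≤ 2^m' := Nat.one_le_two_pow
  have hpow : 2^(1+m') = 2 * 2^m' := by ring
  have hn : (2^(1+m') - 2) % 2 = 0 ∧ (2^(1+m') - 2) / 2 = 2^m' - 1 := by omega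
  rw [lucas2, hn.1, hn.2, hj]
  rw [zmod_pow_sub_one m' (j/2) (by omega)]
  simp

section Aux
variable {F L ι : Type*} [Field F] [AddCommGroup L] [Module F L]

lemma coord_kill (Bas : Module.Basis ι F L) (T : L →ₗ[F] L) (σ : ι → Option ι)
    (hTb : ∀ i, T (Bas i) = (σ i).elim 0 Bas)
    (hinj : ∀ i j t, σ i = some t → σ j = some t → i = j)
    {v : L} (hv : T v = 0) {i₀ t₀ : ι} (h0 : σ i₀ = some t₀) : Bas.repr v i₀ = 0 := by
  classical
  set c := Bas.repr v with hc
  have hv1 : T v = (c.sum fun i a => a • T (Bas i)) := by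
    conv_lhs => rw [← Bas.linearCombination_repr v]
    rw [Finsupp.linearCombination_apply, Finsupp.sum, Finsupp.sum, map_sum]
    simp [map_smul, hc]
  have hv2 : Bas.repr (T v) t₀ = c.sum fun i a => a * (Bas.repr (T (Bas i)) t₀) := by
    rw [hv1, Finsupp.sum, Finsupp.sum, map_sum, Finsupp.finset_sum_apply]
    refine Finset.sum_congr rfl fun i _ => ?_
    rw [map_smul, Finsupp.smul_apply, smul_eq_mul]
  have hval : ∀ i, Bas.repr (T (Bas i)) t₀ = if i = i₀ then 1 else 0 := by
    intro i
    rcases hσ : σ i with _ | t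
    · rw [hTb i, hσ]
      have : i ≠ i₀ := by rintro rfl; rw [h0] at hσ; cases hσ
      simp [this]
    · rw [hTb i, hσ]
      simp only [Option.elim, Module.Basis.repr_self]
      by_cases ht : t = t₀
      · subst ht
        have : i = i₀ := hinj _ _ _ hσ h0
        simp [this, Finsupp.single_apply]
      · have : i ≠ i₀ := by rintro rfl; rw [h0] at hσ; exact ht (Option.some_injective _ hσ).symm
        simp [Finsupp.single_apply, ht, this]
  rw [hv] at hv2
  simp only [map_zero, Finsupp.coe_zero, Pi.zero_apply] at hv2
  rw [Finsupp.sum] at hv2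
  have : ∑ i ∈ c.support, c i * (Bas.repr (T (Bas i)) t₀) = if i₀ ∈ c.support then c i₀ else 0 := by
    rw [← Finset.sum_ite_eq' c.support i₀ (fun i => c i)]
    refine Finset.sum_congr rfl fun i _ => ?_
    rw [hval i]
    by_cases h : i = i₀ <;> simp [h]
  rw [this] at hv2
  by_cases h : i₀ ∈ c.support
  · rw [if_pos h] at hv2; exact hv2.symm
  · exact Finsupp.notMem_support_iff.mp h

lemma nilp_of_weight (Bas : Module.Basis ι F L) (T : L →ₗ[F] L) (σ : ι → Option ι) (w : ι → ℕ) (K : ℕ)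
    (hTb : ∀ i, T (Bas i) = (σ i).elim 0 Bas)
    (hw : ∀ i t, σ i = some t → w t < w i) (hK : ∀ i, w i ≤ K) :
    ∀ v : L, (T ^ (K + 1)) v = 0 := by
  have claim : ∀ n, ∀ v ∈ Submodule.span F (Bas '' {i | w i < n}), (T ^ n) v = 0 := by
    intro n
    induction n with
    | zero =>
        intro v hv
        simp only [Nat.not_lt_zero, Set.setOf_false, Set.image_empty, Submodule.span_empty,
          Submodule.mem_bot] at hv
        simp [hv]
    | succ n ih =>
        intro v hv
        rw [pow_succ, Module.End.mul_apply]
        refine ih _ ?_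
        refine Submodule.span_induction ?_ (by simp) (fun a b _ _ ha hb => by
          rw [map_add]; exact Submodule.add_mem _ ha hb)
          (fun r a _ ha => by rw [map_smul]; exact Submodule.smul_mem _ r ha) hv
        rintro _ ⟨i, hi, rfl⟩
        rw [hTb i]
        rcases hσ : σ i with _ | t
        · simp
        · simp only [Option.elim]
          refine Submodule.subset_span ⟨t, ?_, rfl⟩
          have := hw i t hσ
          simp only [Set.mem_setOf_eq] at hi ⊢
          omega
  intro v
  refine claim (K+1) v ?_
  have : {i | w i < K + 1} = Set.univ := by
    ext i; simp only [Set.mem_setOf_eq, Set.mem_univ, iff_true]; exact Nat.lt_succ_of_le (hK i)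
  rw [this, Set.image_univ, Module.Basis.span_eq]
  trivial

end Aux

/-- Index type for the basis of `S(2,m)`. -/

abbrev SIdx (n1 n2 : ℕ) := Fin n2 ⊕ (Fin n1 ⊕ Fin n1 × Fin n2)

namespace SIdx

variable {n1 n2 : ℕ}

/-- The basis family. -/
def fam {L : Type*} (x y : ℕ → L) (z : ℕ → ℕ → L) : SIdx n1 n2 → L
  | .inl j => x j.1
  | .inr (.inl i) => y i.1
  | .inr (.inr (a, k)) => z a.1 k.1

/-- Index action of `ad x₀`. -/
def sigA : SIdx n1 n2 → Option (SIdx n1 n2)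
  | .inl _ => none
  | .inr (.inl ⟨0, _⟩) => none
  | .inr (.inl ⟨i+1, h⟩) => some (.inr (.inl ⟨i, by omega⟩))
  | .inr (.inr (⟨0, _⟩, k)) => some (.inl k)
  | .inr (.inr (⟨a+1, h⟩, k)) => some (.inr (.inr (⟨a, by omega⟩, k)))

/-- Index action of `ad y₀`. -/
def sigB : SIdx n1 n2 → Option (SIdx n1 n2)
  | .inr (.inl _) => none
  | .inl ⟨0, _⟩ => none
  | .inl ⟨j+1, h⟩ => some (.inl ⟨j, by omega⟩)
  | .inr (.inr (a, ⟨0, _⟩)) => some (.inr (.inl a))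
  | .inr (.inr (a, ⟨k+1, h⟩)) => some (.inr (.inr (a, ⟨k, by omega⟩)))

/-- weight -/
def wt : SIdx n1 n2 → ℕ
  | .inl j => j.1 + 1
  | .inr (.inl i) => i.1 + 1
  | .inr (.inr (a, k)) => a.1 + k.1 + 2

lemma sigA_inj : ∀ i j t : SIdx n1 n2, sigA i = some t → sigA j = some t → i = j := by
  intro i j t h1 h2
  rw [← h2] at h1
  obtain (j1|⟨i1,hi1⟩|⟨⟨a1,ha1⟩,k1⟩) := i <;>
    obtain (j2|⟨i2,hi2⟩|⟨⟨a2,ha2⟩,k2⟩) := j <;>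
      (try rcases i1 with _|i1) <;> (try rcases i2 with _|i2) <;>
      (try rcases a1 with _|a1) <;> (try rcases a2 with _|a2) <;>
      simp_all [sigA, Fin.ext_iff, Prod.ext_iff] <;> (try subst h1) <;>
      (try simp_all [Fin.ext_iff, Prod.ext_iff]) <;> omega

lemma sigB_inj : ∀ i j t : SIdx n1 n2, sigB i = some t → sigB j = some t → i = j := by
  intro i j t h1 h2
  rw [← h2] at h1
  obtain (⟨j1,hj1⟩|i1|⟨a1,⟨k1,hk1⟩⟩) := i <;>
    obtain (⟨j2,hj2⟩|i2|⟨a2,⟨k2,hk2⟩⟩) := j <;>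
      (try rcases j1 with _|j1) <;> (try rcases j2 with _|j2) <;>
      (try rcases k1 with _|k1) <;> (try rcases k2 with _|k2) <;>
      simp_all [sigB, Fin.ext_iff, Prod.ext_iff] <;> (try subst h1) <;>
      (try simp_all [Fin.ext_iff, Prod.ext_iff]) <;> omega

lemma sigA_wt : ∀ i t : SIdx n1 n2, sigA i = some t → wt t < wt i := by
  intro i t h
  obtain (j1|⟨i1,hi1⟩|⟨⟨a1,ha1⟩,k1⟩) := i <;>
    (try rcases i1 with _|i1) <;> (try rcases a1 with _|a1) <;>
    simp_all [sigA] <;> (subst h; simp [wt]) <;> omega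

lemma sigB_wt : ∀ i t : SIdx n1 n2, sigB i = some t → wt t < wt i := by
  intro i t h
  obtain (⟨j1,hj1⟩|i1|⟨a1,⟨k1,hk1⟩⟩) := i <;>
    (try rcases j1 with _|j1) <;> (try rcases k1 with _|k1) <;>
    simp_all [sigB] <;> (subst h; simp [wt]) <;> omega

end SIdx

end SpecialAux



set_option maxHeartbeats 1000000 in
/-- For the special algebra `S = S(2,(m₁,m₂))` over a field of
characteristic 2 with `m₁, m₂ ≥ 2`, the derived subalgebra `S'` is a simple Lie
algebra of dimension `2^{m₁+m₂} - 2`. -/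
theorem special_derived_simple
    (F : Type*) [Field F] [CharP F 2] (m1 m2 : ℕ)
    (L : Type*) [LieRing L] [LieAlgebra F L]
    (x y : ℕ → L) (z : ℕ → ℕ → L)
    -- basis elements, extended by zero outside their index ranges:
    (hx0 : ∀ j, 2 ^ m2 - 2 < j → x j = 0)
    (hy0 : ∀ i, 2 ^ m1 - 2 < i → y i = 0)
    (hz0 : ∀ i j, 2 ^ m1 - 2 < i ∨ 2 ^ m2 - 2 < j → z i j = 0)
    (hspan : Submodule.span F
      (Set.range x ∪ Set.range y ∪ {w | ∃ i j, w = z i j}) = ⊤)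
    (hdim : Module.finrank F L = 2 ^ (m1 + m2) - 1)
    -- the bracket relations of S(2,(m1,m2)):
    (hxx : ∀ i j, ⁅x i, x j⁆ = 0)
    (hyy : ∀ i j, ⁅y i, y j⁆ = 0)
    (hzz : ∀ i j k l, i ≤ 2 ^ m1 - 2 → k ≤ 2 ^ m1 - 2 → j ≤ 2 ^ m2 - 2 → l ≤ 2 ^ m2 - 2 →
      ⁅z i j, z k l⁆ = sGamma (F := F) i j k l • z (i + k) (j + l))
    (hx0y : ∀ i, 1 ≤ i → i ≤ 2 ^ m1 - 2 → ⁅x 0, y i⁆ = y (i - 1))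
    (hx0y0 : ⁅x 0, y 0⁆ = 0)
    (hy0x : ∀ j, 1 ≤ j → j ≤ 2 ^ m2 - 2 → ⁅y 0, x j⁆ = x (j - 1))
    (hy0x0 : ⁅y 0, x 0⁆ = 0)
    (hxy : ∀ i j, 1 ≤ i → i ≤ 2 ^ m2 - 2 → 1 ≤ j → j ≤ 2 ^ m1 - 2 →
      ⁅x i, y j⁆ = z (j - 1) (i - 1))
    (hxz0 : ∀ i k, i ≤ 2 ^ m2 - 2 → k ≤ 2 ^ m2 - 2 →
      ⁅x i, z 0 k⁆ = (Nat.choose (i + k + 1) i : F) • x (i + k))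
    (hxz : ∀ i j k, i ≤ 2 ^ m2 - 2 → k ≤ 2 ^ m2 - 2 → 1 ≤ j → j ≤ 2 ^ m1 - 2 →
      ⁅x i, z j k⁆ = (Nat.choose (i + k + 1) i : F) • z (j - 1) (i + k))
    (hyz0 : ∀ i j, i ≤ 2 ^ m1 - 2 → j ≤ 2 ^ m1 - 2 →
      ⁅y i, z j 0⁆ = (Nat.choose (i + j + 1) i : F) • y (i + j))
    (hyz : ∀ i j k, i ≤ 2 ^ m1 - 2 → j ≤ 2 ^ m1 - 2 → 1 ≤ k → k ≤ 2 ^ m2 - 2 →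
      ⁅y i, z j k⁆ = (Nat.choose (i + j + 1) i : F) • z (i + j) (k - 1))
    (hm1 : 2 ≤ m1) (hm2 : 2 ≤ m2) :
    LieAlgebra.IsSimple F (LieAlgebra.derivedSeries F L 1) ∧
      Module.finrank F (LieAlgebra.derivedSeries F L 1) = 2 ^ (m1 + m2) - 2 := by
  classical
  have h4m1 : 4 ≤ 2^m1 := by calc (4:ℕ) = 2^2 := rfl
                                  _ ≤ 2^m1 := Nat.pow_le_pow_right (by norm_num) hm1
  have h4m2 : 4 ≤ 2^m2 := by calc (4:ℕ) = 2^2 := rfl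
                                  _ ≤ 2^m2 := Nat.pow_le_pow_right (by norm_num) hm2
  set M1 : ℕ := 2^m1 - 2 with hM1d
  set M2 : ℕ := 2^m2 - 2 with hM2d
  have hM1 : 2 ≤ M1 := by omega
  have hM2 : 2 ≤ M2 := by omega
  have hcast1 : ∀ n : ℕ, ((n:ZMod 2) = 1) → ((n : F) = 1) := by
    intro n h
    have := map_natCast (ZMod.castHom (dvd_refl 2) F) n
    rw [h] at this; simpa using this.symm
  have hcast0 : ∀ n : ℕ, ((n:ZMod 2) = 0) → ((n : F) = 0) := by
    intro n h
    have := map_natCast (ZMod.castHom (dvd_refl 2) F) n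
    rw [h] at this; simpa using this.symm
  have he1 : M1 + 1 = 2^m1 - 1 := by omega
  have he2 : M2 + 1 = 2^m2 - 1 := by omega
  have fact1 : ∀ r ≤ M1 + 1, (((M1+1).choose r : F)) = 1 := by
    intro r hr
    refine hcast1 _ ?_
    rw [he1] at hr ⊢
    exact zmod_pow_sub_one m1 r hr
  have fact2 : ∀ r ≤ M2 + 1, (((M2+1).choose r : F)) = 1 := by
    intro r hr
    refine hcast1 _ ?_
    rw [he2] at hr ⊢
    exact zmod_pow_sub_one m2 r hr
  have factO : ∀ j, j % 2 = 1 → ((M2.choose j : F)) = 0 := fun j hj =>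
    hcast0 _ (by rw [hM2d]; exact zmod_odd_idx m2 j (by omega) hj)
  have factE : ∀ j, j % 2 = 0 → j ≤ M2 → ((M2.choose j : F)) = 1 := fun j hj hj2 =>
    hcast1 _ (by rw [hM2d]; exact zmod_even_idx m2 j (by omega) hj (by omega))
  have hM2even : M2 % 2 = 0 := by
    have hm : m2 = (m2 - 1) + 1 := by omega
    have h2 : 2^m2 = 2^(m2-1) * 2 := by conv_lhs => rw [hm, pow_succ]
    omega
  have hgamma : ∀ i j k l : ℕ, i + k = M1 → j + l = M2 → j ≤ M2 →
      sGamma (F := F) i j k l = 0 := by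
    intro i j k l hik hjl hjM
    have hi1 : i + 1 ≤ M1 + 1 := by omega
    have hi0 : i ≤ M1 + 1 := by omega
    unfold sGamma
    rw [hik, hjl, fact1 _ hi1, fact1 _ hi0, one_mul, one_mul]
    rcases Nat.eq_zero_or_pos j with hj0 | hjpos
    · subst hj0
      rw [if_pos rfl, factO 1 (by omega)]
      ring
    · rw [if_neg (by omega)]
      rcases Nat.mod_two_eq_zero_or_one j with hpar | hpar
      · rw [factO (j-1) (by omega), factO (j+1) (by omega)]
        ring
      · have hjlt : j < M2 := by omega
        rw [factE (j-1) (by omega) (by omega), factE (j+1) (by omega) (by omega)]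
        ring
  -- choose-value helpers
  have hch0 : ∀ a : ℕ, ((Nat.choose a 0 : ℕ) : F) = 1 := by intro a; simp
  -- the basis
  set n1 : ℕ := M1 + 1 with hn1d
  set n2 : ℕ := M2 + 1 with hn2d
  set b : SIdx n1 n2 → L := SIdx.fam x y z with hbd
  have hbx : ∀ j : Fin n2, b (.inl j) = x j.1 := fun _ => rfl
  have hby : ∀ i : Fin n1, b (.inr (.inl i)) = y i.1 := fun _ => rfl
  have hbz : ∀ a : Fin n1, ∀ k : Fin n2, b (.inr (.inr (a, k))) = z a.1 k.1 := fun _ _ => rfl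
  have hcard : Fintype.card (SIdx n1 n2) = 2 ^ (m1 + m2) - 1 := by
    have hab : 2^(m1+m2) = 2^m1 * 2^m2 := pow_add 2 m1 m2
    obtain ⟨a', ha'⟩ : ∃ a', 2^m1 = a' + 4 := ⟨2^m1 - 4, by omega⟩
    obtain ⟨b', hb'⟩ : ∃ b', 2^m2 = b' + 4 := ⟨2^m2 - 4, by omega⟩
    have h1 : n1 = a' + 3 := by omega
    have h2 : n2 = b' + 3 := by omega
    simp only [Fintype.card_sum, Fintype.card_prod, Fintype.card_fin, h1, h2, hab, ha', hb']
    have : (a' + 4) * (b' + 4) = (b'+3) + ((a'+3) + (a'+3)*(b'+3)) + 1 := by ring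
    omega
  have hspan' : ⊤ ≤ Submodule.span F (Set.range b) := by
    rw [← hspan]
    refine Submodule.span_le.mpr ?_
    rintro w ((⟨j, rfl⟩ | ⟨i, rfl⟩) | ⟨i, j, rfl⟩)
    · by_cases hj : j ≤ M2
      · exact Submodule.subset_span ⟨.inl ⟨j, by omega⟩, rfl⟩
      · rw [hx0 j (by omega)]; exact zero_mem _
    · by_cases hi : i ≤ M1
      · exact Submodule.subset_span ⟨.inr (.inl ⟨i, by omega⟩), rfl⟩
      · rw [hy0 i (by omega)]; exact zero_mem _
    · by_cases hij : i ≤ M1 ∧ j ≤ M2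
      · exact Submodule.subset_span ⟨.inr (.inr (⟨i, by omega⟩, ⟨j, by omega⟩)), rfl⟩
      · rw [hz0 i j (by omega)]; exact zero_mem _
  set Bas : Module.Basis (SIdx n1 n2) F L :=
    basisOfTopLeSpanOfCardEqFinrank b hspan' (hcard.trans hdim.symm) with hBasd
  have hb : ⇑Bas = b := coe_basisOfTopLeSpanOfCardEqFinrank b hspan' (hcard.trans hdim.symm)
  -- actions of ad x0 and ad y0 on the basis
  have hAb : ∀ i : SIdx n1 n2, ⁅x 0, b i⁆ = (SIdx.sigA i).elim 0 b := by
    rintro (⟨j, hj⟩ | ⟨i, hi⟩ | ⟨⟨a, ha⟩, ⟨k, hk⟩⟩)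
    · simpa [hbd, SIdx.fam, SIdx.sigA] using hxx 0 j
    · rcases i with _ | i
      · simpa [hbd, SIdx.fam, SIdx.sigA] using hx0y0
      · have h := hx0y (i+1) (by omega) (by omega)
        simp only [Nat.add_sub_cancel] at h
        simpa [hbd, SIdx.fam, SIdx.sigA] using h
    · rcases a with _ | a
      · have h := hxz0 0 k (by omega) (by omega)
        simp only [Nat.choose_zero_right, Nat.cast_one, one_smul, zero_add] at h
        simpa [hbd, SIdx.fam, SIdx.sigA] using h
      · have h := hxz 0 (a+1) k (by omega) (by omega) (by omega) (by omega)
        simp only [Nat.choose_zero_right, Nat.cast_one, one_smul, zero_add,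
          Nat.add_sub_cancel] at h
        simpa [hbd, SIdx.fam, SIdx.sigA] using h
  have hBb : ∀ i : SIdx n1 n2, ⁅y 0, b i⁆ = (SIdx.sigB i).elim 0 b := by
    rintro (⟨j, hj⟩ | ⟨i, hi⟩ | ⟨⟨a, ha⟩, ⟨k, hk⟩⟩)
    · rcases j with _ | j
      · simpa [hbd, SIdx.fam, SIdx.sigB] using hy0x0
      · have h := hy0x (j+1) (by omega) (by omega)
        simp only [Nat.add_sub_cancel] at h
        simpa [hbd, SIdx.fam, SIdx.sigB] using h
    · simpa [hbd, SIdx.fam, SIdx.sigB] using hyy 0 i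
    · rcases k with _ | k
      · have h := hyz0 0 a (by omega) (by omega)
        simp only [Nat.choose_zero_right, Nat.cast_one, one_smul, zero_add] at h
        simpa [hbd, SIdx.fam, SIdx.sigB] using h
      · have h := hyz 0 a (k+1) (by omega) (by omega) (by omega) (by omega)
        simp only [Nat.choose_zero_right, Nat.cast_one, one_smul, zero_add,
          Nat.add_sub_cancel] at h
        simpa [hbd, SIdx.fam, SIdx.sigB] using h
  -- the submodule W (span of all basis vectors except the top z)
  set itop : SIdx n1 n2 := .inr (.inr (⟨M1, by omega⟩, ⟨M2, by omega⟩)) with hitopd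
  set W : Submodule F L := Submodule.span F (b '' {i | i ≠ itop}) with hWd
  have hmemW : ∀ i : SIdx n1 n2, i ≠ itop → b i ∈ W :=
    fun i hi => Submodule.subset_span ⟨i, hi, rfl⟩
  have hxW : ∀ j, x j ∈ W := by
    intro j
    by_cases hj : j ≤ M2
    · exact hmemW (.inl ⟨j, by omega⟩) (by simp [hitopd])
    · rw [hx0 j (by omega)]; exact zero_mem _
  have hyW : ∀ i, y i ∈ W := by
    intro i
    by_cases hi : i ≤ M1
    · exact hmemW (.inr (.inl ⟨i, by omega⟩)) (by simp [hitopd])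
    · rw [hy0 i (by omega)]; exact zero_mem _
  have hzW : ∀ a k, ¬(a = M1 ∧ k = M2) → z a k ∈ W := by
    intro a k hak
    by_cases h : a ≤ M1 ∧ k ≤ M2
    · refine hmemW (.inr (.inr (⟨a, by omega⟩, ⟨k, by omega⟩))) ?_
      simp only [hitopd, ne_eq, Sum.inr.injEq, Prod.mk.injEq, Fin.mk.injEq]
      tauto
    · rw [hz0 a k (by omega)]; exact zero_mem _
  -- all brackets of basis vectors lie in W
  have hxyW : ∀ i j : ℕ, i ≤ M2 → j ≤ M1 → ⁅x i, y j⁆ ∈ W := by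
    intro i j hi hj
    rcases Nat.eq_zero_or_pos i with rfl | hipos
    · rcases Nat.eq_zero_or_pos j with rfl | hjpos
      · rw [hx0y0]; exact zero_mem _
      · rw [hx0y j (by omega) hj]; exact hyW _
    · rcases Nat.eq_zero_or_pos j with rfl | hjpos
      · rw [← lie_skew, hy0x i (by omega) hi]; exact neg_mem (hxW _)
      · rw [hxy i j (by omega) hi (by omega) hj]
        exact hzW _ _ (by omega)
  have hxzW : ∀ i a k : ℕ, i ≤ M2 → a ≤ M1 → k ≤ M2 → ⁅x i, z a k⁆ ∈ W := by
    intro i a k hi ha hk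
    rcases Nat.eq_zero_or_pos a with rfl | hapos
    · rw [hxz0 i k hi hk]; exact Submodule.smul_mem _ _ (hxW _)
    · rw [hxz i a k hi hk (by omega) ha]
      exact Submodule.smul_mem _ _ (hzW _ _ (by omega))
  have hyzW : ∀ i a k : ℕ, i ≤ M1 → a ≤ M1 → k ≤ M2 → ⁅y i, z a k⁆ ∈ W := by
    intro i a k hi ha hk
    rcases Nat.eq_zero_or_pos k with rfl | hkpos
    · rw [hyz0 i a hi ha]; exact Submodule.smul_mem _ _ (hyW _)
    · rw [hyz i a k hi ha (by omega) hk]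
      exact Submodule.smul_mem _ _ (hzW _ _ (by omega))
  have hzzW : ∀ a k c d : ℕ, a ≤ M1 → k ≤ M2 → c ≤ M1 → d ≤ M2 → ⁅z a k, z c d⁆ ∈ W := by
    intro a k c d ha hk hc hd
    rw [hzz a k c d ha hc hk hd]
    by_cases h : a + c = M1 ∧ k + d = M2
    · rw [hgamma a k c d h.1 h.2 hk, zero_smul]; exact zero_mem _
    · exact Submodule.smul_mem _ _ (hzW _ _ (by omega))
  have hbW : ∀ i j : SIdx n1 n2, ⁅b i, b j⁆ ∈ W := by
    rintro (⟨i1, hi1⟩ | ⟨i1, hi1⟩ | ⟨⟨a1, ha1⟩, ⟨k1, hk1⟩⟩)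
        (⟨j2, hj2⟩ | ⟨j2, hj2⟩ | ⟨⟨a2, ha2⟩, ⟨k2, hk2⟩⟩) <;>
      simp only [SIdx.fam, hbd]
    · rw [hxx]; exact zero_mem _
    · exact hxyW _ _ (by omega) (by omega)
    · exact hxzW _ _ _ (by omega) (by omega) (by omega)
    · rw [← lie_skew]; exact neg_mem (hxyW _ _ (by omega) (by omega))
    · rw [hyy]; exact zero_mem _
    · exact hyzW _ _ _ (by omega) (by omega) (by omega)
    · rw [← lie_skew]; exact neg_mem (hxzW _ _ _ (by omega) (by omega) (by omega))
    · rw [← lie_skew]; exact neg_mem (hyzW _ _ _ (by omega) (by omega) (by omega))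
    · exact hzzW _ _ _ _ (by omega) (by omega) (by omega) (by omega)
  have hbrkW : ∀ u v : L, ⁅u, v⁆ ∈ W := by
    have hbvW : ∀ i : SIdx n1 n2, ∀ v : L, ⁅b i, v⁆ ∈ W := by
      intro i v
      have hv : v ∈ Submodule.span F (Set.range b) := hspan' Submodule.mem_top
      induction hv using Submodule.span_induction with
      | mem w hw => obtain ⟨j, rfl⟩ := hw; exact hbW i j
      | zero => rw [lie_zero]; exact zero_mem _
      | add a c _ _ ha hc => rw [lie_add]; exact Submodule.add_mem _ ha hc
      | smul r a _ ha => rw [lie_smul]; exact Submodule.smul_mem _ r ha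
    intro u v
    have hu : u ∈ Submodule.span F (Set.range b) := hspan' Submodule.mem_top
    induction hu using Submodule.span_induction with
    | mem w hw => obtain ⟨i, rfl⟩ := hw; exact hbvW i v
    | zero => rw [zero_lie]; exact zero_mem _
    | add a c _ _ ha hc => rw [add_lie]; exact Submodule.add_mem _ ha hc
    | smul r a _ ha => rw [smul_lie]; exact Submodule.smul_mem _ r ha
  -- derived series equals W
  have hM2p1F : ((M2 + 1 : ℕ) : F) = 1 := by
    have h := fact2 M2 (by omega)
    rwa [hn2d, Nat.choose_succ_self_right] at h
  have hM1p1F : ((M1 + 1 : ℕ) : F) = 1 := by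
    have h := fact1 M1 (by omega)
    rwa [hn1d, Nat.choose_succ_self_right] at h
  have hD1 : LieAlgebra.derivedSeries F L 1 = ⁅(⊤ : LieIdeal F L), (⊤ : LieIdeal F L)⁆ := by
    rw [LieAlgebra.derivedSeries_def, LieAlgebra.derivedSeriesOfIdeal_succ,
      LieAlgebra.derivedSeriesOfIdeal_zero]
  have hmemD : ∀ u v : L, ⁅u, v⁆ ∈ LieAlgebra.derivedSeries F L 1 := by
    intro u v
    rw [hD1]
    exact LieSubmodule.lie_mem_lie (LieSubmodule.mem_top _) (LieSubmodule.mem_top _)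
  have hDW : LieSubmodule.toSubmodule (LieAlgebra.derivedSeries F L 1) = W := by
    refine le_antisymm ?_ ?_
    · rw [hD1, LieSubmodule.lieIdeal_oper_eq_linear_span']
      refine Submodule.span_le.mpr ?_
      rintro w ⟨u, -, v, -, rfl⟩
      exact hbrkW u v
    · refine Submodule.span_le.mpr ?_
      rintro w ⟨i, hi, rfl⟩
      rw [SetLike.mem_coe, LieSubmodule.mem_toSubmodule]
      rcases i with ⟨j, hj⟩ | ⟨i, hi'⟩ | ⟨⟨a, ha⟩, ⟨k, hk⟩⟩
      · rw [hbx]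
        by_cases hjM : j = M2
        · subst hjM
          have h := hxz0 M2 0 (le_refl _) (by omega)
          rw [add_zero, Nat.choose_succ_self_right, hM2p1F, one_smul] at h
          rw [← h]; exact hmemD _ _
        · have h := hy0x (j+1) (by omega) (by omega)
          rw [Nat.add_sub_cancel] at h
          rw [← h]; exact hmemD _ _
      · rw [hby]
        by_cases hiM : i = M1
        · subst hiM
          have h := hyz0 M1 0 (le_refl _) (by omega)
          rw [add_zero, Nat.choose_succ_self_right, hM1p1F, one_smul] at h
          rw [← h]; exact hmemD _ _
        · have h := hx0y (i+1) (by omega) (by omega)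
          rw [Nat.add_sub_cancel] at h
          rw [← h]; exact hmemD _ _
      · rw [hbz]
        by_cases hkM : k = M2
        · subst hkM
          have haM : a ≠ M1 := by
            intro h; apply hi; rw [hitopd]; subst h; rfl
          have h := hxz 0 (a+1) M2 (by omega) (le_refl _) (by omega) (by omega)
          rw [Nat.choose_zero_right, Nat.cast_one, one_smul, zero_add, Nat.add_sub_cancel] at h
          rw [← h]; exact hmemD _ _
        · have h := hyz 0 a (k+1) (by omega) (by omega) (by omega) (by omega)
          rw [Nat.choose_zero_right, Nat.cast_one, one_smul, zero_add, Nat.add_sub_cancel] at h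
          rw [← h]; exact hmemD _ _
  -- finrank of W
  have hfrW : Module.finrank F ↥W = 2 ^ (m1 + m2) - 2 := by
    have hli : LinearIndependent F (b ∘ (Subtype.val : {i : SIdx n1 n2 // i ≠ itop} → _)) := by
      have h := Bas.linearIndependent
      rw [hb] at h
      exact h.comp Subtype.val Subtype.val_injective
    have hrange : Set.range (b ∘ (Subtype.val : {i : SIdx n1 n2 // i ≠ itop} → _)) =
        b '' {i | i ≠ itop} := by
      rw [Set.range_comp, Subtype.range_coe_subtype]
    have hfr := finrank_span_eq_card hli
    rw [hrange] at hfr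
    rw [hWd, hfr]
    have hcns : Fintype.card {i : SIdx n1 n2 // i ≠ itop} = Fintype.card (SIdx n1 n2) - 1 := by
      have h1 : Fintype.card {i : SIdx n1 n2 // i = itop} = 1 := Fintype.card_subtype_eq itop
      have h2 := Fintype.card_subtype_compl (fun i : SIdx n1 n2 => i = itop)
      simp only [h1] at h2
      simpa using h2
    rw [hcns, hcard]
    have hple : 2^m1 ≤ 2^(m1+m2) := Nat.pow_le_pow_right (by norm_num) (by omega)
    omega
  have hfrD : Module.finrank F ↥(LieAlgebra.derivedSeries F L 1) = 2 ^ (m1 + m2) - 2 :=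
    (LinearEquiv.finrank_eq (LinearEquiv.ofEq _ _ hDW)).trans hfrW
  -- membership of basis vectors in the derived series
  have hmemD' : ∀ u : L, u ∈ W → u ∈ LieAlgebra.derivedSeries F L 1 := by
    intro u hu
    rw [← LieSubmodule.mem_toSubmodule, hDW]
    exact hu
  have hx0D : x 0 ∈ LieAlgebra.derivedSeries F L 1 := hmemD' _ (hxW 0)
  have hy1D : y 1 ∈ LieAlgebra.derivedSeries F L 1 := hmemD' _ (hyW 1)
  have hy0ne : y 0 ≠ 0 := by
    have h := Bas.ne_zero (.inr (.inl (⟨0, by omega⟩ : Fin n1)))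
    rw [hb] at h
    exact h
  refine ⟨⟨?_, ?_⟩, hfrD⟩
  · -- ideals are ⊥ or ⊤
    intro I
    by_cases hIbot : I = ⊥
    · exact Or.inl hIbot
    right
    rw [LieSubmodule.eq_bot_iff] at hIbot
    push_neg at hIbot
    obtain ⟨w, hwI, hw0⟩ := hIbot
    -- the image of I in L
    set I' : Submodule F L :=
      Submodule.map (LieSubmodule.toSubmodule (LieAlgebra.derivedSeries F L 1)).subtype
        (LieSubmodule.toSubmodule I) with hI'd
    have hclo : ∀ u : L, u ∈ W → ∀ v : L, v ∈ I' → ⁅u, v⁆ ∈ I' := by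
      intro u hu v hv
      obtain ⟨v1, hv1, rfl⟩ := hv
      exact ⟨⁅(⟨u, hmemD' u hu⟩ : ↥(LieAlgebra.derivedSeries F L 1)), v1⁆,
        LieSubmodule.lie_mem I hv1, rfl⟩
    have hvI' : (w : L) ∈ I' := ⟨w, hwI, rfl⟩
    have hvne : (w : L) ≠ 0 := fun h => hw0 (Subtype.ext h)
    set v : L := (w : L) with hvd
    -- the operators ad x0, ad y0
    set A : L →ₗ[F] L := (LieAlgebra.ad F L (x 0) : L →ₗ[F] L) with hAd
    set B : L →ₗ[F] L := (LieAlgebra.ad F L (y 0) : L →ₗ[F] L) with hBd2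
    have hAap : ∀ v : L, A v = ⁅x 0, v⁆ := fun _ => rfl
    have hBap : ∀ v : L, B v = ⁅y 0, v⁆ := fun _ => rfl
    have hAb' : ∀ i, A (Bas i) = (SIdx.sigA i).elim 0 Bas := by
      intro i; rw [hb, hAap]; exact hAb i
    have hBb' : ∀ i, B (Bas i) = (SIdx.sigB i).elim 0 Bas := by
      intro i; rw [hb, hBap]; exact hBb i
    set K : ℕ := M1 + M2 + 2 with hKd
    have hKb : ∀ i : SIdx n1 n2, SIdx.wt i ≤ K := by
      rintro (⟨j, hj⟩ | ⟨i, hi⟩ | ⟨⟨a, ha⟩, ⟨k, hk⟩⟩) <;> simp [SIdx.wt] <;> omega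
    have hAnil : ∀ v : L, (A ^ (K + 1)) v = 0 :=
      nilp_of_weight Bas A SIdx.sigA SIdx.wt K hAb' SIdx.sigA_wt hKb
    have hBnil : ∀ v : L, (B ^ (K + 1)) v = 0 :=
      nilp_of_weight Bas B SIdx.sigB SIdx.wt K hBb' SIdx.sigB_wt hKb
    have hcomm : A * B = B * A := by
      ext v
      show A (B v) = B (A v)
      rw [hAap, hBap, hAap, hBap, leibniz_lie, hx0y0, zero_lie, zero_add]
    have hcpow : ∀ p : ℕ, B * A ^ p = A ^ p * B := by
      intro p
      induction p with
      | zero => simp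
      | succ p ih => rw [pow_succ, ← mul_assoc, ih, mul_assoc, ← hcomm, ← mul_assoc]
    have hIA : ∀ p : ℕ, ∀ u : L, u ∈ I' → (A ^ p) u ∈ I' := by
      intro p
      induction p with
      | zero => intro u hu; simpa using hu
      | succ p ih =>
          intro u hu
          rw [pow_succ, Module.End.mul_apply]
          exact ih _ (by rw [hAap]; exact hclo _ (hxW 0) _ hu)
    have hIB : ∀ p : ℕ, ∀ u : L, u ∈ I' → (B ^ p) u ∈ I' := by
      intro p
      induction p with
      | zero => intro u hu; simpa using hu
      | succ p ih =>
          intro u hu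
          rw [pow_succ, Module.End.mul_apply]
          exact ih _ (by rw [hBap]; exact hclo _ (hyW 0) _ hu)
    -- find a maximal (p,q) with A^p B^q v ≠ 0
    set P : ℕ → Prop := fun n => ∃ p q, p + q = n ∧ (A ^ p) ((B ^ q) v) ≠ 0 with hPd
    have hP0 : P 0 := ⟨0, 0, rfl, by simpa using hvne⟩
    have hPbd : ∀ n, P n → n ≤ 2 * K + 2 := by
      intro n ⟨p, q, hpq, hne⟩
      by_contra hlt
      rcases Nat.le_or_le (K+1) p with hp | hp
      · have : A ^ p = A ^ (p - (K+1)) * A ^ (K+1) := by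
          rw [← pow_add]; congr 1; omega
        rw [this, Module.End.mul_apply, hAnil, map_zero] at hne
        exact hne rfl
      · have hq : K + 1 ≤ q := by omega
        have : B ^ q = B ^ (q - (K+1)) * B ^ (K+1) := by
          rw [← pow_add]; congr 1; omega
        rw [this, Module.End.mul_apply, hBnil, map_zero, map_zero] at hne
        exact hne rfl
    set nmax : ℕ := Nat.findGreatest P (2 * K + 2) with hnd
    have hPn : P nmax := Nat.findGreatest_spec (m := 0) (by omega) hP0
    have hmax : ∀ m, nmax < m → ¬ P m := by
      intro m hm hPm
      by_cases hmB : m ≤ 2 * K + 2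
      · exact Nat.findGreatest_is_greatest hm hmB hPm
      · exact hmB (hPbd m hPm)
    obtain ⟨p, q, hpq, hne⟩ := hPn
    set u : L := (A ^ p) ((B ^ q) v) with hud
    have huI' : u ∈ I' := hIA p _ (hIB q v hvI')
    have hAu : A u = 0 := by
      by_contra h
      refine hmax (nmax + 1) (by omega) ⟨p + 1, q, by omega, ?_⟩
      rw [pow_succ', Module.End.mul_apply]
      exact h
    have hBu : B u = 0 := by
      by_contra h
      refine hmax (nmax + 1) (by omega) ⟨p, q + 1, by omega, ?_⟩
      have h1 : (A ^ p) ((B ^ (q + 1)) v) = (A ^ p * B) ((B ^ q) v) := by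
        rw [pow_succ']; rfl
      rw [h1, ← hcpow p]
      exact h
    -- u lies in span {x 0, y 0}
    set ix0 : SIdx n1 n2 := .inl ⟨0, by omega⟩ with hix0d
    set iy0 : SIdx n1 n2 := .inr (.inl ⟨0, by omega⟩) with hiy0d
    have hker : ∀ i : SIdx n1 n2, i ≠ ix0 → i ≠ iy0 → Bas.repr u i = 0 := by
      rintro (⟨j, hj⟩ | ⟨i, hi⟩ | ⟨⟨a, ha⟩, ⟨k, hk⟩⟩) h1 h2
      · rcases j with _ | j
        · exact absurd rfl h1
        · exact coord_kill Bas B SIdx.sigB hBb' SIdx.sigB_inj hBu rfl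
      · rcases i with _ | i
        · exact absurd rfl h2
        · exact coord_kill Bas A SIdx.sigA hAb' SIdx.sigA_inj hAu rfl
      · rcases a with _ | a
        · exact coord_kill Bas A SIdx.sigA hAb' SIdx.sigA_inj hAu rfl
        · exact coord_kill Bas A SIdx.sigA hAb' SIdx.sigA_inj hAu rfl
    have hu_span : u ∈ Submodule.span F {x 0, y 0} := by
      have hrepr : u = Finsupp.sum (Bas.repr u) fun i a => a • Bas i := by
        conv_lhs => rw [← Bas.linearCombination_repr u]
        rw [Finsupp.linearCombination_apply]
      rw [hrepr, Finsupp.sum]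
      refine Submodule.sum_mem _ ?_
      intro i hi
      by_cases h1 : i = ix0
      · subst h1
        refine Submodule.smul_mem _ _ (Submodule.subset_span ?_)
        rw [hb]
        exact Set.mem_insert _ _
      · by_cases h2 : i = iy0
        · subst h2
          refine Submodule.smul_mem _ _ (Submodule.subset_span ?_)
          rw [hb]
          exact Set.mem_insert_iff.mpr (Or.inr rfl)
        · exact absurd (hker i h1 h2) (Finsupp.mem_support_iff.mp hi)
    obtain ⟨cx, cy, hcxy⟩ := Submodule.mem_span_pair.mp hu_span
    -- x 0 belongs to I'
    have hx0I' : x 0 ∈ I' := by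
      rcases eq_or_ne cy 0 with hcy | hcy
      · have hcx : cx ≠ 0 := by
          rintro rfl
          rw [hcy, zero_smul, zero_smul, add_zero] at hcxy
          exact hne hcxy.symm
        have := Submodule.smul_mem I' cx⁻¹ huI'
        rw [← hcxy, hcy, zero_smul, add_zero, smul_smul, inv_mul_cancel₀ hcx, one_smul] at this
        exact this
      · have h := hclo (x 1) (hxW 1) u huI'
        have hbr : ⁅x 1, u⁆ = -(cy • x 0) := by
          rw [← hcxy, lie_add, lie_smul, lie_smul, hxx, smul_zero, zero_add, ← lie_skew,
            hy0x 1 (le_refl 1) (by omega), smul_neg]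
        rw [hbr] at h
        have := Submodule.smul_mem I' (-cy⁻¹) h
        rw [smul_neg, neg_smul, neg_neg, smul_smul, inv_mul_cancel₀ hcy, one_smul] at this
        exact this
    have hy0I' : y 0 ∈ I' := by
      have h := hclo (y 1) (hyW 1) _ hx0I'
      rw [← lie_skew, hx0y 1 (le_refl 1) (by omega)] at h
      simpa using (Submodule.neg_mem I' h)
    have hxkI' : ∀ k, k ≤ M2 → x k ∈ I' := by
      intro k hk
      have h := hclo (z 0 k) (hzW 0 k (by omega)) _ hx0I'
      rw [← lie_skew, hxz0 0 k (by omega) hk, Nat.choose_zero_right, Nat.cast_one, one_smul,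
        zero_add] at h
      simpa using (Submodule.neg_mem I' h)
    have hyjI' : ∀ j, j ≤ M1 → y j ∈ I' := by
      intro j hj
      have h := hclo (z j 0) (hzW j 0 (by omega)) _ hy0I'
      rw [← lie_skew, hyz0 0 j (by omega) hj, Nat.choose_zero_right, Nat.cast_one, one_smul,
        zero_add] at h
      simpa using (Submodule.neg_mem I' h)
    have hz1I' : ∀ a, a ≤ M1 - 1 → ∀ k, k ≤ M2 - 1 → z a k ∈ I' := by
      intro a ha k hk
      have h := hclo (x (k+1)) (hxW (k+1)) _ (hyjI' (a+1) (by omega))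
      rw [hxy (k+1) (a+1) (by omega) (by omega) (by omega) (by omega),
        Nat.add_sub_cancel, Nat.add_sub_cancel] at h
      exact h
    have hz2I' : ∀ a, a ≤ M1 - 1 → z a M2 ∈ I' := by
      intro a ha
      have h := hclo (z (a+1) (M2-1)) (hzW (a+1) (M2-1) (by omega)) _ (hxkI' 1 (by omega))
      rw [← lie_skew, hxz 1 (a+1) (M2-1) (by omega) (by omega) (by omega) (by omega),
        Nat.add_sub_cancel] at h
      have he : 1 + (M2-1) + 1 = M2 + 1 := by omega
      have he' : 1 + (M2-1) = M2 := by omega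
      rw [he, he', Nat.choose_one_right, hM2p1F, one_smul] at h
      simpa using (Submodule.neg_mem I' h)
    have hz3I' : ∀ k, k ≤ M2 - 1 → z M1 k ∈ I' := by
      intro k hk
      have h := hclo (z (M1-1) (k+1)) (hzW (M1-1) (k+1) (by omega)) _ (hyjI' 1 (by omega))
      rw [← lie_skew, hyz 1 (M1-1) (k+1) (by omega) (by omega) (by omega) (by omega),
        Nat.add_sub_cancel] at h
      have he : 1 + (M1-1) + 1 = M1 + 1 := by omega
      have he' : 1 + (M1-1) = M1 := by omega
      rw [he, he', Nat.choose_one_right, hM1p1F, one_smul] at h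
      simpa using (Submodule.neg_mem I' h)
    have hWI' : W ≤ I' := by
      refine Submodule.span_le.mpr ?_
      rintro _ ⟨i, hi, rfl⟩
      rcases i with ⟨j, hj⟩ | ⟨i, hi'⟩ | ⟨⟨a, ha⟩, ⟨k, hk⟩⟩
      · rw [hbx]; exact hxkI' j (by omega)
      · rw [hby]; exact hyjI' i (by omega)
      · rw [hbz]
        by_cases haM : a = M1
        · subst haM
          have hkM : k ≠ M2 := by
            intro hkM; apply hi; rw [hitopd]; subst hkM; rfl
          exact hz3I' k (by omega)
        · by_cases hkM : k = M2
          · subst hkM; exact hz2I' a (by omega)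
          · exact hz1I' a (by omega) k (by omega)
    -- conclude I = ⊤
    ext m
    simp only [LieSubmodule.mem_top, iff_true]
    have hm : (m : L) ∈ I' := by
      apply hWI'
      rw [← hDW]
      exact m.2
    obtain ⟨e, he, hee⟩ := hm
    have : e = m := Subtype.ext hee
    rw [← this]
    exact he
  · -- non-abelian
    intro habs
    have h := habs.trivial ⟨x 0, hx0D⟩ ⟨y 1, hy1D⟩
    have h2 : ⁅x 0, y 1⁆ = 0 := congrArg Subtype.val h
    rw [hx0y 1 (le_refl 1) (by omega)] at h2
    exact hy0ne (by simpa using h2)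
end

section
/- Let I be a nonzero ideal of S' = S(2,(m_1,m_2))' over a field of characteristic 2. If I contains a nonzero element of the form v = Σ λ_i x_i + Σ μ_j y_j (all z-coefficients zero), then x_0 ∈ I. -/
/-- shift a coefficient function down by one, truncating at `n`. -/
private def shf {F : Type*} [Zero F] (n : ℕ) (f : ℕ → F) (i : ℕ) : F :=
  if i + 1 < n then f (i + 1) else 0

/-- shift a coefficient function down by `k`, truncating at `n`. -/
private def trk {F : Type*} [Zero F] (n : ℕ) (f : ℕ → F) (k i : ℕ) : F :=
  if i + k < n then f (i + k) else 0

private lemma shf_trk {F : Type*} [Zero F] (n : ℕ) (f : ℕ → F) (k : ℕ) :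
    shf n (trk n f k) = trk n f (k + 1) := by
  funext i
  simp only [shf, trk]
  rcases lt_or_ge (i + (k + 1)) n with h | h
  · rw [if_pos (show i + 1 < n by omega), if_pos (show i + 1 + k < n by omega), if_pos h]
    congr 1
    omega
  · rw [if_neg (show ¬ i + (k + 1) < n by omega)]
    by_cases h1 : i + 1 < n
    · rw [if_pos h1, if_neg (show ¬ i + 1 + k < n by omega)]
    · rw [if_neg h1]

private lemma lie_sum'' {L : Type*} [LieRing L] {ι : Type*} (a : L) (s : Finset ι) (f : ι → L) :
    ⁅a, ∑ i ∈ s, f i⁆ = ∑ i ∈ s, ⁅a, f i⁆ :=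
  map_sum (AddMonoidHom.mk' (fun b => ⁅a, b⁆) (lie_add a)) f s

private lemma sum_trk_smul {F L : Type*} [Field F] [AddCommGroup L] [Module F L]
    (g : ℕ → L) (f : ℕ → F) (n K : ℕ) (hK : K < n)
    (hz : ∀ i, K < i → i < n → f i = 0) :
    ∑ i ∈ Finset.range n, trk n f K i • g i = f K • g 0 := by
  rw [Finset.sum_eq_single 0]
  · simp only [trk, Nat.zero_add, if_pos hK]
  · intro i _ hi0
    have h : trk n f K i = 0 := by
      simp only [trk]
      split_ifs with h
      · exact hz (i + K) (by omega) h
      · rfl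
    rw [h, zero_smul]
  · intro h
    exact absurd (Finset.mem_range.mpr (by omega)) h

private lemma exists_maxidx {F : Type*} [Field F] {n : ℕ} {f : ℕ → F}
    (h : ∃ i, i < n ∧ f i ≠ 0) :
    ∃ K, K < n ∧ f K ≠ 0 ∧ ∀ i, K < i → i < n → f i = 0 := by
  classical
  obtain ⟨i0, hi0, hf0⟩ := h
  set s : Finset ℕ := (Finset.range n).filter (fun i => f i ≠ 0) with hs
  have hsne : s.Nonempty :=
    ⟨i0, by rw [hs, Finset.mem_filter, Finset.mem_range]; exact ⟨hi0, hf0⟩⟩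
  have hmem : s.max' hsne ∈ Finset.filter (fun i => f i ≠ 0) (Finset.range n) :=
    hs ▸ Finset.max'_mem s hsne
  rw [Finset.mem_filter, Finset.mem_range] at hmem
  refine ⟨s.max' hsne, hmem.1, hmem.2, ?_⟩
  intro i hgt hin
  by_contra hne
  have hle : i ≤ s.max' hsne := Finset.le_max' s i
    (by rw [hs, Finset.mem_filter, Finset.mem_range]; exact ⟨hin, hne⟩)
  omega

/-- Let `I` be a nonzero ideal of `S' = S(2,(m₁,m₂))'` over a
field of characteristic 2. If `I` contains a nonzero element of the form
`v = Σ λᵢ xᵢ + Σ μⱼ yⱼ` (all `z`-coefficients zero), then `x₀ ∈ I`. -/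
theorem special_derived_ideal_contains_x0
    (F : Type*) [Field F] [CharP F 2] (m1 m2 : ℕ)
    (L : Type*) [LieRing L] [LieAlgebra F L]
    (x y : ℕ → L) (z : ℕ → ℕ → L)
    -- basis elements, extended by zero outside their index ranges:
    (hx0 : ∀ j, 2 ^ m2 - 2 < j → x j = 0)
    (hy0 : ∀ i, 2 ^ m1 - 2 < i → y i = 0)
    (hz0 : ∀ i j, 2 ^ m1 - 2 < i ∨ 2 ^ m2 - 2 < j → z i j = 0)
    (hspan : Submodule.span F
      (Set.range x ∪ Set.range y ∪ {w | ∃ i j, w = z i j}) = ⊤)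
    (hdim : Module.finrank F L = 2 ^ (m1 + m2) - 1)
    -- the bracket relations of S(2,(m1,m2)):
    (hxx : ∀ i j, ⁅x i, x j⁆ = 0)
    (hyy : ∀ i j, ⁅y i, y j⁆ = 0)
    (hzz : ∀ i j k l, i ≤ 2 ^ m1 - 2 → k ≤ 2 ^ m1 - 2 → j ≤ 2 ^ m2 - 2 → l ≤ 2 ^ m2 - 2 →
      ⁅z i j, z k l⁆ = sGamma (F := F) i j k l • z (i + k) (j + l))
    (hx0y : ∀ i, 1 ≤ i → i ≤ 2 ^ m1 - 2 → ⁅x 0, y i⁆ = y (i - 1))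
    (hx0y0 : ⁅x 0, y 0⁆ = 0)
    (hy0x : ∀ j, 1 ≤ j → j ≤ 2 ^ m2 - 2 → ⁅y 0, x j⁆ = x (j - 1))
    (hy0x0 : ⁅y 0, x 0⁆ = 0)
    (hxy : ∀ i j, 1 ≤ i → i ≤ 2 ^ m2 - 2 → 1 ≤ j → j ≤ 2 ^ m1 - 2 →
      ⁅x i, y j⁆ = z (j - 1) (i - 1))
    (hxz0 : ∀ i k, i ≤ 2 ^ m2 - 2 → k ≤ 2 ^ m2 - 2 →
      ⁅x i, z 0 k⁆ = (Nat.choose (i + k + 1) i : F) • x (i + k))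
    (hxz : ∀ i j k, i ≤ 2 ^ m2 - 2 → k ≤ 2 ^ m2 - 2 → 1 ≤ j → j ≤ 2 ^ m1 - 2 →
      ⁅x i, z j k⁆ = (Nat.choose (i + k + 1) i : F) • z (j - 1) (i + k))
    (hyz0 : ∀ i j, i ≤ 2 ^ m1 - 2 → j ≤ 2 ^ m1 - 2 →
      ⁅y i, z j 0⁆ = (Nat.choose (i + j + 1) i : F) • y (i + j))
    (hyz : ∀ i j k, i ≤ 2 ^ m1 - 2 → j ≤ 2 ^ m1 - 2 → 1 ≤ k → k ≤ 2 ^ m2 - 2 →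
      ⁅y i, z j k⁆ = (Nat.choose (i + j + 1) i : F) • z (i + j) (k - 1))
    (hm1 : 2 ≤ m1) (hm2 : 2 ≤ m2) :
    ∀ I : LieIdeal F (LieAlgebra.derivedSeries F L 1), I ≠ ⊥ →
      ∀ v : LieAlgebra.derivedSeries F L 1, v ∈ I → (v : L) ≠ 0 →
      (∃ lam mu : ℕ → F, (v : L) =
          ∑ i ∈ Finset.range (2 ^ m2 - 1), lam i • x i +
            ∑ j ∈ Finset.range (2 ^ m1 - 1), mu j • y j) →
      ∃ h : x 0 ∈ LieAlgebra.derivedSeries F L 1,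
        (⟨x 0, h⟩ : LieAlgebra.derivedSeries F L 1) ∈ I := by
  classical
  intro I _hI v hvI hvne hex
  obtain ⟨lam, mu, hv⟩ := hex
  have h4m1 : 4 ≤ 2 ^ m1 := by
    calc (4 : ℕ) = 2 ^ 2 := by norm_num
    _ ≤ 2 ^ m1 := Nat.pow_le_pow_right (by norm_num) hm1
  have h4m2 : 4 ≤ 2 ^ m2 := by
    calc (4 : ℕ) = 2 ^ 2 := by norm_num
    _ ≤ 2 ^ m2 := Nat.pow_le_pow_right (by norm_num) hm2
  have hmemS : ∀ a b : L, ⁅a, b⁆ ∈ LieAlgebra.derivedSeries F L 1 := fun a b =>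
    LieSubmodule.lie_mem_lie (LieSubmodule.mem_top a) (LieSubmodule.mem_top b)
  have hy0S : y 0 ∈ LieAlgebra.derivedSeries F L 1 := by
    have h := hmemS (x 0) (y 1)
    rwa [hx0y 1 le_rfl (by omega)] at h
  have hx0S : x 0 ∈ LieAlgebra.derivedSeries F L 1 := by
    have h := hmemS (y 0) (x 1)
    rwa [hy0x 1 le_rfl (by omega)] at h
  have hx1S : x 1 ∈ LieAlgebra.derivedSeries F L 1 := by
    have h := hmemS (y 0) (x 2)
    rwa [hy0x 2 (by omega) (by omega)] at h
  -- the key identity ⁅x 1, y 0⁆ = x 0, via the Jacobi identity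
  have hx1y0 : ⁅x 1, y 0⁆ = x 0 := by
    have h1 : y 0 = ⁅x 0, y 1⁆ := (hx0y 1 le_rfl (by omega)).symm
    rw [h1, leibniz_lie, hxx, zero_lie, zero_add,
      hxy 1 1 le_rfl (by omega) le_rfl (by omega),
      hxz0 0 0 (by omega) (by omega)]
    norm_num
  -- bracketing with y 0 shifts the x-coefficients
  have lemY : ∀ a : ℕ → F,
      ⁅y 0, ∑ i ∈ Finset.range (2 ^ m2 - 1), a i • x i⁆ =
        ∑ i ∈ Finset.range (2 ^ m2 - 1), shf (2 ^ m2 - 1) a i • x i := by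
    intro a
    have hp : 2 ^ m2 - 1 = (2 ^ m2 - 2) + 1 := by omega
    rw [lie_sum'', hp, Finset.sum_range_succ', Finset.sum_range_succ]
    rw [lie_smul, hy0x0, smul_zero, add_zero]
    have htop : shf ((2 ^ m2 - 2) + 1) a (2 ^ m2 - 2) = 0 := by
      simp [shf]
    rw [htop, zero_smul, add_zero]
    refine Finset.sum_congr rfl fun i hi => ?_
    rw [Finset.mem_range] at hi
    rw [lie_smul, hy0x (i + 1) (by omega) (by omega)]
    simp only [shf, Nat.add_sub_cancel, if_pos (show i + 1 < (2 ^ m2 - 2) + 1 by omega)]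
  -- bracketing with x 0 kills the x-part and shifts the y-coefficients
  have lemX : ∀ a b : ℕ → F,
      ⁅x 0, (∑ i ∈ Finset.range (2 ^ m2 - 1), a i • x i) +
          ∑ j ∈ Finset.range (2 ^ m1 - 1), b j • y j⁆ =
        ∑ j ∈ Finset.range (2 ^ m1 - 1), shf (2 ^ m1 - 1) b j • y j := by
    intro a b
    rw [lie_add]
    have h1 : ⁅x 0, ∑ i ∈ Finset.range (2 ^ m2 - 1), a i • x i⁆ = 0 := by
      rw [lie_sum'']
      exact Finset.sum_eq_zero fun i _ => by rw [lie_smul, hxx, smul_zero]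
    rw [h1, zero_add]
    have hp : 2 ^ m1 - 1 = (2 ^ m1 - 2) + 1 := by omega
    rw [lie_sum'', hp, Finset.sum_range_succ', Finset.sum_range_succ]
    rw [lie_smul, hx0y0, smul_zero, add_zero]
    have htop : shf ((2 ^ m1 - 2) + 1) b (2 ^ m1 - 2) = 0 := by
      simp [shf]
    rw [htop, zero_smul, add_zero]
    refine Finset.sum_congr rfl fun j hj => ?_
    rw [Finset.mem_range] at hj
    rw [lie_smul, hx0y (j + 1) (by omega) (by omega)]
    simp only [shf, Nat.add_sub_cancel, if_pos (show j + 1 < (2 ^ m1 - 2) + 1 by omega)]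
  -- bracketing with x 1 extracts x 0
  have lemX1 : ∀ (a : ℕ → F) (c : F),
      ⁅x 1, (∑ i ∈ Finset.range (2 ^ m2 - 1), a i • x i) + c • y 0⁆ = c • x 0 := by
    intro a c
    rw [lie_add, lie_sum'',
      Finset.sum_eq_zero (fun i _ => by rw [lie_smul, hxx, smul_zero]), zero_add,
      lie_smul, hx1y0]
  have hzero_sum : ∀ (n : ℕ) (f : ℕ → F) (g : ℕ → L), (∀ j, j < n → f j = 0) →
      ∑ j ∈ Finset.range n, f j • g j = 0 := fun n f g h =>
    Finset.sum_eq_zero fun j hj => by rw [h j (Finset.mem_range.mp hj), zero_smul]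
  refine ⟨hx0S, ?_⟩
  by_cases hmu : ∀ j, j < 2 ^ m1 - 1 → mu j = 0
  · -- Case A : the element is a combination of the x i only
    have hvx : (v : L) = ∑ i ∈ Finset.range (2 ^ m2 - 1), lam i • x i := by
      rw [hv, hzero_sum _ _ _ hmu, add_zero]
    have hexl : ∃ i, i < 2 ^ m2 - 1 ∧ lam i ≠ 0 := by
      by_contra hc
      push_neg at hc
      exact hvne (hvx.trans (hzero_sum _ _ _ hc))
    obtain ⟨K, hKn, hKne, hKmax⟩ := exists_maxidx hexl
    have key : ∀ k, ∃ w : LieAlgebra.derivedSeries F L 1, w ∈ I ∧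
        (w : L) = ∑ i ∈ Finset.range (2 ^ m2 - 1), trk (2 ^ m2 - 1) lam k i • x i := by
      intro k
      induction k with
      | zero =>
        refine ⟨v, hvI, hvx.trans ?_⟩
        refine Finset.sum_congr rfl fun i hi => ?_
        rw [Finset.mem_range] at hi
        simp only [trk, Nat.add_zero, if_pos hi]
      | succ k ih =>
        obtain ⟨w, hwI, hwc⟩ := ih
        refine ⟨⁅(⟨y 0, hy0S⟩ : LieAlgebra.derivedSeries F L 1), w⁆, I.lie_mem hwI, ?_⟩
        have hcoe : ((⁅(⟨y 0, hy0S⟩ : LieAlgebra.derivedSeries F L 1), w⁆ :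
            LieAlgebra.derivedSeries F L 1) : L) = ⁅y 0, (w : L)⁆ := rfl
        rw [hcoe, hwc, lemY, shf_trk]
    obtain ⟨w, hwI, hwc⟩ := key K
    have hwc' : (w : L) = lam K • x 0 := by
      rw [hwc]
      exact sum_trk_smul x lam _ K hKn hKmax
    have heq : (⟨x 0, hx0S⟩ : LieAlgebra.derivedSeries F L 1) = (lam K)⁻¹ • w := by
      apply Subtype.ext
      show x 0 = (lam K)⁻¹ • (w : L)
      rw [hwc', smul_smul, inv_mul_cancel₀ hKne, one_smul]
    rw [heq]
    exact I.smul_mem' _ hwI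
  · -- Case B : some y-coefficient is nonzero
    push_neg at hmu
    obtain ⟨M, hMn, hMne, hMmax⟩ := exists_maxidx hmu
    have key : ∀ k, ∃ w : LieAlgebra.derivedSeries F L 1, w ∈ I ∧
        (w : L) = (∑ i ∈ Finset.range (2 ^ m2 - 1), (if k = 0 then lam i else 0) • x i) +
          ∑ j ∈ Finset.range (2 ^ m1 - 1), trk (2 ^ m1 - 1) mu k j • y j := by
      intro k
      induction k with
      | zero =>
        refine ⟨v, hvI, hv.trans ?_⟩
        have e1 : ∑ i ∈ Finset.range (2 ^ m2 - 1), lam i • x i =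
            ∑ i ∈ Finset.range (2 ^ m2 - 1), (if (0 : ℕ) = 0 then lam i else 0) • x i :=
          Finset.sum_congr rfl fun i _ => by norm_num
        have e2 : ∑ j ∈ Finset.range (2 ^ m1 - 1), mu j • y j =
            ∑ j ∈ Finset.range (2 ^ m1 - 1), trk (2 ^ m1 - 1) mu 0 j • y j := by
          refine Finset.sum_congr rfl fun j hj => ?_
          rw [Finset.mem_range] at hj
          simp only [trk, Nat.add_zero, if_pos hj]
        rw [e1, e2]
      | succ k ih =>
        obtain ⟨w, hwI, hwc⟩ := ih
        refine ⟨⁅(⟨x 0, hx0S⟩ : LieAlgebra.derivedSeries F L 1), w⁆, I.lie_mem hwI, ?_⟩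
        have hcoe : ((⁅(⟨x 0, hx0S⟩ : LieAlgebra.derivedSeries F L 1), w⁆ :
            LieAlgebra.derivedSeries F L 1) : L) = ⁅x 0, (w : L)⁆ := rfl
        have h0 : (∑ i ∈ Finset.range (2 ^ m2 - 1), (if k + 1 = 0 then lam i else 0) • x i)
            = 0 := Finset.sum_eq_zero fun i _ => by simp
        rw [hcoe, hwc, lemX, shf_trk, h0, zero_add]
    obtain ⟨w, hwI, hwc⟩ := key M
    have hwc' : (w : L) = (∑ i ∈ Finset.range (2 ^ m2 - 1),
        (if M = 0 then lam i else 0) • x i) + mu M • y 0 := by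
      rw [hwc, sum_trk_smul y mu _ M hMn hMmax]
    have hfin : ((⁅(⟨x 1, hx1S⟩ : LieAlgebra.derivedSeries F L 1), w⁆ :
        LieAlgebra.derivedSeries F L 1) : L) = mu M • x 0 := by
      have hcoe : ((⁅(⟨x 1, hx1S⟩ : LieAlgebra.derivedSeries F L 1), w⁆ :
          LieAlgebra.derivedSeries F L 1) : L) = ⁅x 1, (w : L)⁆ := rfl
      rw [hcoe, hwc', lemX1]
    have heq : (⟨x 0, hx0S⟩ : LieAlgebra.derivedSeries F L 1) =
        (mu M)⁻¹ • ⁅(⟨x 1, hx1S⟩ : LieAlgebra.derivedSeries F L 1), w⁆ := by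
      apply Subtype.ext
      show x 0 = (mu M)⁻¹ • _
      rw [hfin, smul_smul, inv_mul_cancel₀ hMne, one_smul]
    rw [heq]
    exact I.smul_mem' _ (I.lie_mem hwI)
end
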